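/- arXiv:2006.11581 — 4 statements merged into one kernel-verified Lean document; each statement's English description precedes it below -/
import Mathlib

section
/- The kernel K(τ; z, x) = (2i(x - z)(x - z̄)/(z - z̄))^τ satisfies: (-∂/∂z + ∂/∂z̄ + 4/(z - z̄)) K(τ; z, x) = ((2+τ)/(2i(1+τ)(1+2τ))) ∂²_x K(τ+1; z, x) + (2iτ(τ-1)/(1+2τ)) K(τ-1; z, x), for z in the upper half-plane, x real, and τ avoiding the poles {-1, -1/2, 1/2}. -/
open Complex

/-- The kernel with `z` and `z̄` viewed as independent variables `z`, `w`:
`K(τ; z, w, x) = (2i(x-z)(x-w)/(z-w))^τ`. -/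
noncomputable def lobK2 (τ z w : ℂ) (x : ℝ) : ℂ :=
  (2 * Complex.I * ((x : ℂ) - z) * ((x : ℂ) - w) / (z - w)) ^ τ

private lemma base_eq (z : ℂ) (hz : z.im ≠ 0) (y : ℝ) :
    2 * Complex.I * ((y : ℂ) - z) * ((y : ℂ) - (starRingEnd ℂ) z) / (z - (starRingEnd ℂ) z)
      = ((Complex.normSq ((y : ℂ) - z) / z.im : ℝ) : ℂ) := by
  have h1 : ((y : ℂ) - (starRingEnd ℂ) z) = (starRingEnd ℂ) ((y : ℂ) - z) := by
    simp [map_sub, Complex.conj_ofReal]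
  have h2 : z - (starRingEnd ℂ) z = (2 * z.im : ℝ) * Complex.I := Complex.sub_conj z
  rw [h2, mul_assoc, h1, Complex.mul_conj]
  have hI : (Complex.I : ℂ) ≠ 0 := Complex.I_ne_zero
  have hz' : ((z.im : ℂ)) ≠ 0 := by exact_mod_cast hz
  push_cast
  field_simp

private lemma base_pos (z : ℂ) (hz : 0 < z.im) (y : ℝ) :
    0 < Complex.normSq ((y : ℂ) - z) / z.im := by
  apply div_pos _ hz
  rw [Complex.normSq_pos]
  intro h
  have him : ((y : ℂ) - z).im = 0 := by rw [h]; simp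
  rw [Complex.sub_im, Complex.ofReal_im] at him
  linarith

set_option maxHeartbeats 2000000 in
/-- `(-∂_z + ∂_z̄ + 4/(z-z̄)) K(τ)
  = ((2+τ)/(2i(1+τ)(1+2τ))) ∂²_x K(τ+1) + (2iτ(τ-1)/(1+2τ)) K(τ-1)`,
where `∂_z`, `∂_z̄` are Wirtinger derivatives (derivatives in the independent
variables `z` and `w = z̄`). -/
theorem stmt7 (τ z : ℂ) (x : ℝ) (hz : 0 < z.im)
    (h1 : τ ≠ -1) (h2 : τ ≠ -(1/2)) (h3 : τ ≠ 1/2) :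
    -(deriv (fun z' => lobK2 τ z' ((starRingEnd ℂ) z) x) z)
        + deriv (fun w => lobK2 τ z w x) ((starRingEnd ℂ) z)
        + (4 / (z - (starRingEnd ℂ) z)) * lobK2 τ z ((starRingEnd ℂ) z) x
      = ((2 + τ) / (2 * Complex.I * (1 + τ) * (1 + 2 * τ)))
          * deriv (deriv (fun y : ℝ => lobK2 (τ + 1) z ((starRingEnd ℂ) z) y)) x
        + (2 * Complex.I * τ * (τ - 1) / (1 + 2 * τ))
          * lobK2 (τ - 1) z ((starRingEnd ℂ) z) x := by
  have hzi : z.im ≠ 0 := ne_of_gt hz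
  set w : ℂ := (starRingEnd ℂ) z with hw
  have hdw : z - w ≠ 0 := by
    rw [hw, Complex.sub_conj]
    exact mul_ne_zero (by exact_mod_cast mul_ne_zero two_ne_zero hzi) Complex.I_ne_zero
  have hslit : ∀ y : ℝ,
      (2 * Complex.I * ((y : ℂ) - z) * ((y : ℂ) - w) / (z - w)) ∈ Complex.slitPlane := by
    intro y
    rw [hw, base_eq z hzi y]
    exact Complex.ofReal_mem_slitPlane.2 (base_pos z hz y)
  have hBne : (2 * Complex.I * ((x : ℂ) - z) * ((x : ℂ) - w) / (z - w)) ≠ 0 :=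
    Complex.slitPlane_ne_zero (hslit x)
  -- derivative in z
  have hA : HasDerivAt (fun z' : ℂ => (2 * Complex.I * ((x : ℂ) - z') * ((x : ℂ) - w) / (z' - w)) ^ τ)
      (τ * (2 * Complex.I * ((x : ℂ) - z) * ((x : ℂ) - w) / (z - w)) ^ (τ - 1)
        * (-(2 * Complex.I * ((x : ℂ) - w) ^ 2) / (z - w) ^ 2)) z := by
    have h := (((((hasDerivAt_id' z).const_sub ((x : ℂ))).const_mul
        (2 * Complex.I)).mul_const ((x : ℂ) - w)).div
        ((hasDerivAt_id' z).sub_const w) hdw).cpow_const (c := τ) (hslit x)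
    exact h.congr_deriv (by simp only [Pi.div_apply]; ring)
  -- derivative in w
  have hB : HasDerivAt (fun w' : ℂ => (2 * Complex.I * ((x : ℂ) - z) * ((x : ℂ) - w') / (z - w')) ^ τ)
      (τ * (2 * Complex.I * ((x : ℂ) - z) * ((x : ℂ) - w) / (z - w)) ^ (τ - 1)
        * (2 * Complex.I * ((x : ℂ) - z) ^ 2 / (z - w) ^ 2)) w := by
    have h := ((((hasDerivAt_id' w).const_sub ((x : ℂ))).const_mul
        (2 * Complex.I * ((x : ℂ) - z))).div
        ((hasDerivAt_id' w).const_sub z) hdw).cpow_const (c := τ) (hslit x)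
    exact h.congr_deriv (by simp only [Pi.div_apply]; ring)
  -- inner x-derivative of the base, at every real point
  have hin : ∀ y : ℝ, HasDerivAt (fun ζ : ℂ => 2 * Complex.I * (ζ - z) * (ζ - w) / (z - w))
      (2 * Complex.I * (2 * (y : ℂ) - z - w) / (z - w)) y := by
    intro y
    have h := ((((hasDerivAt_id' (y:ℂ)).sub_const z).const_mul (2 * Complex.I)).mul
      ((hasDerivAt_id' (y:ℂ)).sub_const w)).div_const (z - w)
    exact h.congr_deriv (by ring)
  -- first x-derivative
  have hF : ∀ y : ℝ, HasDerivAt (fun y' : ℝ => lobK2 (τ + 1) z w y')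
      ((τ + 1) * (2 * Complex.I * ((y : ℂ) - z) * ((y : ℂ) - w) / (z - w)) ^ τ
        * (2 * Complex.I * (2 * (y : ℂ) - z - w) / (z - w))) y := by
    intro y
    have h := (((hin y).cpow_const (c := τ + 1) (hslit y))).comp_ofReal
    have h' := h.congr_deriv (g' := (τ + 1) * (2 * Complex.I * ((y : ℂ) - z) * ((y : ℂ) - w) / (z - w)) ^ τ
        * (2 * Complex.I * (2 * (y : ℂ) - z - w) / (z - w)))
        (by rw [show τ + 1 - 1 = τ by ring])
    exact h'
  have hdF : deriv (fun y : ℝ => lobK2 (τ + 1) z w y)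
      = fun y : ℝ => (τ + 1) * (2 * Complex.I * ((y : ℂ) - z) * ((y : ℂ) - w) / (z - w)) ^ τ
        * (2 * Complex.I * (2 * (y : ℂ) - z - w) / (z - w)) :=
    funext fun y => (hF y).deriv
  -- second x-derivative at x
  have hP : HasDerivAt (fun y : ℝ =>
      (τ + 1) * (2 * Complex.I * ((y : ℂ) - z) * ((y : ℂ) - w) / (z - w)) ^ τ)
      ((τ + 1) * (τ * (2 * Complex.I * ((x : ℂ) - z) * ((x : ℂ) - w) / (z - w)) ^ (τ - 1)
        * (2 * Complex.I * (2 * (x : ℂ) - z - w) / (z - w)))) x :=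
    ((((hin x).cpow_const (c := τ) (hslit x))).comp_ofReal).const_mul (τ + 1)
  have hQ : HasDerivAt (fun y : ℝ => 2 * Complex.I * (2 * (y : ℂ) - z - w) / (z - w))
      (4 * Complex.I / (z - w)) x := by
    have h := ((((((hasDerivAt_id' ((x:ℝ):ℂ)).const_mul 2).sub_const z).sub_const w).const_mul
      (2 * Complex.I)).div_const (z - w)).comp_ofReal
    exact h.congr_deriv (by ring)
  have hG : HasDerivAt (fun y : ℝ => (τ + 1) * (2 * Complex.I * ((y : ℂ) - z) * ((y : ℂ) - w) / (z - w)) ^ τ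
      * (2 * Complex.I * (2 * (y : ℂ) - z - w) / (z - w))) _ x := hP.mul hQ
  -- rewrite all the derivatives
  rw [hdF]
  simp only [lobK2]
  rw [hA.deriv, hB.deriv, hG.deriv]
  -- algebra
  have hBt : (2 * Complex.I * ((x : ℂ) - z) * ((x : ℂ) - w) / (z - w)) ^ τ
      = (2 * Complex.I * ((x : ℂ) - z) * ((x : ℂ) - w) / (z - w)) ^ (τ - 1)
        * (2 * Complex.I * ((x : ℂ) - z) * ((x : ℂ) - w) / (z - w)) := by
    conv_lhs => rw [show τ = (τ - 1) + 1 by ring]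
    rw [Complex.cpow_add _ _ hBne, Complex.cpow_one]
  rw [hBt]
  set P : ℂ := (2 * Complex.I * ((x : ℂ) - z) * ((x : ℂ) - w) / (z - w)) ^ (τ - 1) with hP'
  have hτ1 : (1 : ℂ) + τ ≠ 0 := by
    intro h; exact h1 (by linear_combination h)
  have hτ2 : (1 : ℂ) + 2 * τ ≠ 0 := by
    intro h; exact h2 (by linear_combination h / 2)
  have hI : (Complex.I : ℂ) ≠ 0 := Complex.I_ne_zero
  have hD : 2 * Complex.I * (1 + τ) * (1 + 2 * τ) * ((z - w) * (z - w)) ≠ 0 := by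
    apply mul_ne_zero (mul_ne_zero (mul_ne_zero (mul_ne_zero two_ne_zero hI) hτ1) hτ2)
    exact mul_ne_zero hdw hdw
  field_simp [hI, hτ1, hτ2, hdw]
  ring_nf
  have hτ2' : (1 : ℂ) + τ * 2 ≠ 0 := by rwa [mul_comm] at hτ2
  field_simp
  ring
end

section
/- Let Ω_n be the set of integer pairs (p, q) with 0 ≤ p ≤ n, 0 ≤ q ≤ n, and (p,q) ≠ (n,n), and let A_n be the span of the rational functions z^p z̄^q/(z - z̄)^n for (p,q) ∈ Ω_n, inside the field of rational functions in two independent variables z, z̄. Then the sum A = ∑_n A_n is a subalgebra of the field of rational functions: the product of an element of A_m and an element of A_n lies in A. -/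
open MvPolynomial

/-- The field of rational functions in two independent variables `z, z̄`. -/
abbrev RatField2 : Type := FractionRing (MvPolynomial (Fin 2) ℂ)

noncomputable instance : Algebra ℂ RatField2 :=
  ((algebraMap (MvPolynomial (Fin 2) ℂ) RatField2).comp
    (algebraMap ℂ (MvPolynomial (Fin 2) ℂ))).toAlgebra

/-- The variable `z`. -/
noncomputable def Zvar : RatField2 := algebraMap (MvPolynomial (Fin 2) ℂ) RatField2 (X 0)

/-- The variable `z̄`. -/
noncomputable def Wvar : RatField2 := algebraMap (MvPolynomial (Fin 2) ℂ) RatField2 (X 1)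

/-- `A_n` : the span of `z^p z̄^q / (z - z̄)^n` over `(p,q) ∈ Ω_n`,
where `Ω_n = ([0,n] × [0,n]) \ {(n,n)}`. -/
noncomputable def An (n : ℕ) : Submodule ℂ RatField2 :=
  Submodule.span ℂ {f | ∃ p q : ℕ, p ≤ n ∧ q ≤ n ∧ (p, q) ≠ (n, n) ∧
    f = Zvar ^ p * Wvar ^ q / (Zvar - Wvar) ^ n}

lemma gen_mul_gen {m n p q r s : ℕ} (hp : p ≤ m) (hq : q ≤ m) (hpq : (p, q) ≠ (m, m))
    (hr : r ≤ n) (hs : s ≤ n) (hrs : (r, s) ≠ (n, n)) :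
    Zvar ^ p * Wvar ^ q / (Zvar - Wvar) ^ m * (Zvar ^ r * Wvar ^ s / (Zvar - Wvar) ^ n)
      ∈ An (m + n) := by
  apply Submodule.subset_span
  refine ⟨p + r, q + s, by omega, by omega, ?_, ?_⟩
  · simp only [ne_eq, Prod.mk.injEq, not_and] at hpq hrs ⊢
    omega
  · rw [div_mul_div_comm, pow_add, pow_add, pow_add]
    ring

lemma An_mul_An {m n : ℕ} {f g : RatField2} (hf : f ∈ An m) (hg : g ∈ An n) :
    f * g ∈ An (m + n) := by
  induction hf using Submodule.span_induction with
  | mem f hf =>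
    obtain ⟨p, q, hp, hq, hpq, rfl⟩ := hf
    induction hg using Submodule.span_induction with
    | mem g hg =>
      obtain ⟨r, s, hr, hs, hrs, rfl⟩ := hg
      exact gen_mul_gen hp hq hpq hr hs hrs
    | zero => simp
    | add x y _ _ hx hy => rw [mul_add]; exact (An (m + n)).add_mem hx hy
    | smul c x _ hx => rw [mul_smul_comm]; exact (An (m + n)).smul_mem c hx
  | zero => simp
  | add x y _ _ hx hy => rw [add_mul]; exact (An (m + n)).add_mem hx hy
  | smul c x _ hx => rw [smul_mul_assoc]; exact (An (m + n)).smul_mem c hx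

/-- `A = ∑_n A_n` is closed under multiplication, i.e. is a subalgebra of the
field of rational functions. -/
theorem stmt13 (f g : RatField2) (hf : f ∈ ⨆ n : ℕ, An n) (hg : g ∈ ⨆ n : ℕ, An n) :
    f * g ∈ ⨆ n : ℕ, An n := by
  refine Submodule.iSup_induction (motive := fun f => f * g ∈ ⨆ n : ℕ, An n) _ hf ?_ ?_ ?_
  · intro i x hx
    refine Submodule.iSup_induction (motive := fun g => x * g ∈ ⨆ n : ℕ, An n) _ hg ?_ ?_ ?_
    · intro j y hy
      exact Submodule.mem_iSup_of_mem (i + j) (An_mul_An hx hy)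
    · simp
    · intro a b ha hb
      rw [mul_add]
      exact Submodule.add_mem _ ha hb
  · simp
  · intro a b ha hb
    rw [add_mul]
    exact Submodule.add_mem _ ha hb
end

section
/- With A_n ⊂ ℂ(z, z̄) the span of z^p z̄^q/(z - z̄)^n over (p,q) ∈ Ω_n (Ω_n = [0,n]² ∖ {(n,n)} in integer points), the space A = ∑_n A_n is invariant under each of the six operators ∂_z, z∂_z, z²∂_z, ∂_z̄, z̄∂_z̄, z̄²∂_z̄ (derivatives treating z and z̄ as independent variables). -/
/-- `∂_z` (the variables `z`, `z̄` are treated as independent). -/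
noncomputable def O1 : (ℂ → ℂ → ℂ) → (ℂ → ℂ → ℂ) :=
  fun f z w => deriv (fun z' => f z' w) z
/-- `z ∂_z`. -/
noncomputable def O2 : (ℂ → ℂ → ℂ) → (ℂ → ℂ → ℂ) :=
  fun f z w => z * deriv (fun z' => f z' w) z
/-- `z² ∂_z`. -/
noncomputable def O3 : (ℂ → ℂ → ℂ) → (ℂ → ℂ → ℂ) :=
  fun f z w => z ^ 2 * deriv (fun z' => f z' w) z
/-- `∂_z̄`. -/
noncomputable def O4 : (ℂ → ℂ → ℂ) → (ℂ → ℂ → ℂ) :=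
  fun f z w => deriv (fun w' => f z w') w
/-- `z̄ ∂_z̄`. -/
noncomputable def O5 : (ℂ → ℂ → ℂ) → (ℂ → ℂ → ℂ) :=
  fun f z w => w * deriv (fun w' => f z w') w
/-- `z̄² ∂_z̄`. -/
noncomputable def O6 : (ℂ → ℂ → ℂ) → (ℂ → ℂ → ℂ) :=
  fun f z w => w ^ 2 * deriv (fun w' => f z w') w

/-- `A_n`: the span of the functions `z^p z̄^q/(z - z̄)^n` for
`(p, q) ∈ Ω_n = ([0,n] × [0,n]) \ {(n,n)}`. -/
noncomputable def AnF (n : ℕ) : Submodule ℂ (ℂ → ℂ → ℂ) :=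
  Submodule.span ℂ {f | ∃ p q : ℕ, p ≤ n ∧ q ≤ n ∧ (p, q) ≠ (n, n) ∧
    f = fun z w => z ^ p * w ^ q / (z - w) ^ n}

namespace Stmt14Aux

open Polynomial Filter Topology

/-! ### Polynomial limit lemma -/

lemma keyPoly : ∀ (N : ℕ) (Q : ℂ[X]) (w : ℂ), Q.natDegree ≤ N →
    Filter.Tendsto (fun z => Q.eval z / (z - w) ^ N) (𝓝[≠] w) (𝓝 0) → Q = 0 := by
  intro N
  induction N with
  | zero =>
    intro Q w hdeg ht
    simp only [pow_zero, div_one] at ht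
    have h2 : Filter.Tendsto (fun z => Q.eval z) (𝓝[≠] w) (𝓝 (Q.eval w)) :=
      (Q.continuous_aeval.tendsto w).mono_left nhdsWithin_le_nhds
    have h0 : Q.eval w = 0 := tendsto_nhds_unique h2 ht
    obtain ⟨c, rfl⟩ := Polynomial.natDegree_eq_zero.1 (Nat.le_zero.1 hdeg)
    simp only [Polynomial.eval_C] at h0
    rw [h0, map_zero]
  | succ N ih =>
    intro Q w hdeg ht
    have hroot : Q.eval w = 0 := by
      have h1 : Filter.Tendsto (fun z : ℂ => (z - w) ^ (N + 1)) (𝓝[≠] w) (𝓝 0) := by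
        have : Filter.Tendsto (fun z : ℂ => (z - w) ^ (N + 1)) (𝓝 w) (𝓝 ((w - w) ^ (N + 1))) :=
          ((continuous_id.sub continuous_const).pow (N + 1)).tendsto w
        simpa using this.mono_left nhdsWithin_le_nhds
      have h2 : Filter.Tendsto (fun z => Q.eval z / (z - w) ^ (N + 1) * (z - w) ^ (N + 1))
          (𝓝[≠] w) (𝓝 (0 * 0)) := ht.mul h1
      have h3 : Filter.Tendsto (fun z => Q.eval z) (𝓝[≠] w) (𝓝 0) := by
        rw [show (0 : ℂ) = 0 * 0 by ring]
        refine h2.congr' ?_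
        filter_upwards [self_mem_nhdsWithin] with z hz
        exact div_mul_cancel₀ _ (pow_ne_zero _ (sub_ne_zero.2 hz))
      have h4 : Filter.Tendsto (fun z => Q.eval z) (𝓝[≠] w) (𝓝 (Q.eval w)) :=
        (Q.continuous_aeval.tendsto w).mono_left nhdsWithin_le_nhds
      exact tendsto_nhds_unique h4 h3
    obtain ⟨Q1, hQ1⟩ := Polynomial.dvd_iff_isRoot.2 hroot
    by_cases h0 : Q1 = 0
    · rw [hQ1, h0, mul_zero]
    have hdeg1 : Q1.natDegree ≤ N := by
      have := Polynomial.natDegree_mul (Polynomial.X_sub_C_ne_zero w) h0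
      rw [← hQ1, Polynomial.natDegree_X_sub_C] at this
      omega
    have ht1 : Filter.Tendsto (fun z => Q1.eval z / (z - w) ^ N) (𝓝[≠] w) (𝓝 0) := by
      refine ht.congr' ?_
      filter_upwards [self_mem_nhdsWithin] with z hz
      have hzw : z - w ≠ 0 := sub_ne_zero.2 hz
      rw [hQ1]
      simp only [Polynomial.eval_mul, Polynomial.eval_sub, Polynomial.eval_X, Polynomial.eval_C]
      rw [pow_succ', mul_div_mul_left _ _ hzw]
    exact absurd (ih Q1 w hdeg1 ht1) h0

lemma derivDiag (f : ℂ → ℂ) (w : ℂ) (N : ℕ) (Q : ℂ[X]) (hdeg : Q.natDegree ≤ N)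
    (hf : ∀ z, z ≠ w → f z = Q.eval z / (z - w) ^ N) (hfw : f w = 0) : deriv f w = 0 := by
  by_cases hd : DifferentiableAt ℂ f w
  · have ht : Filter.Tendsto f (𝓝[≠] w) (𝓝 0) := by
      have := hd.continuousAt.tendsto
      rw [hfw] at this
      exact this.mono_left nhdsWithin_le_nhds
    have ht' : Filter.Tendsto (fun z => Q.eval z / (z - w) ^ N) (𝓝[≠] w) (𝓝 0) := by
      refine ht.congr' ?_
      filter_upwards [self_mem_nhdsWithin] with z hz using hf z hz
    have hQ0 := keyPoly N Q w hdeg ht'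
    have hf0 : f = fun _ => 0 := by
      funext z
      by_cases hz : z = w
      · rw [hz]; exact hfw
      · rw [hf z hz, hQ0]; simp
    rw [hf0]
    exact deriv_const w 0
  · exact deriv_zero_of_not_differentiableAt hd

/-! ### Membership lemmas -/

lemma genA {n p q : ℕ} (hp : p ≤ n) (hq : q ≤ n) (hne : (p, q) ≠ (n, n)) :
    (fun z w : ℂ => z ^ p * w ^ q / (z - w) ^ n) ∈ ⨆ m : ℕ, AnF m :=
  le_iSup AnF n (Submodule.subset_span ⟨p, q, hp, hq, hne, rfl⟩)

lemma genA' {n p q : ℕ} (hn : 1 ≤ n) (hp : p ≤ n) (hq : q ≤ n) :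
    (fun z w : ℂ => z ^ p * w ^ q / (z - w) ^ n) ∈ ⨆ m : ℕ, AnF m := by
  by_cases h : (p, q) = (n, n)
  · simp only [Prod.mk.injEq] at h
    obtain ⟨h1, h2⟩ := h
    rw [h1, h2]
    have key : (fun z w : ℂ => z ^ n * w ^ n / (z - w) ^ n) =
        (fun z w : ℂ => z ^ (n + 1) * w ^ n / (z - w) ^ (n + 1)) -
        (fun z w : ℂ => z ^ n * w ^ (n + 1) / (z - w) ^ (n + 1)) := by
      funext z w
      simp only [Pi.sub_apply]
      by_cases hz : z = w
      · rw [hz, sub_self, zero_pow (by omega : n ≠ 0)]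
        simp
      · have hzw : z - w ≠ 0 := sub_ne_zero.2 hz
        field_simp
        ring
    rw [key]
    exact sub_mem
      (genA (by omega) (by omega) (by simp)) (genA (by omega) (by omega) (by simp))
  · exact genA hp hq h

/-! ### The core derivative computation -/

lemma core (p n : ℕ) (hn : 1 ≤ n) (wq z w : ℂ) (hz : z ≠ w) :
    deriv (fun z' => z' ^ p * wq / (z' - w) ^ n) z
      = ((p : ℂ) * z ^ (p - 1) * (z - w) - (n : ℂ) * z ^ p) * wq / (z - w) ^ (n + 1) := by
  obtain ⟨m, rfl⟩ : ∃ m, n = m + 1 := ⟨n - 1, (Nat.succ_pred_eq_of_pos hn).symm⟩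
  have hzw : z - w ≠ 0 := sub_ne_zero.2 hz
  have h1 : HasDerivAt (fun z' : ℂ => z' ^ p * wq) ((p : ℂ) * z ^ (p - 1) * wq) z :=
    (hasDerivAt_pow p z).mul_const _
  have h2 : HasDerivAt (fun z' : ℂ => (z' - w) ^ (m + 1))
      (((m : ℂ) + 1) * (z - w) ^ m * 1) z := by
    have := ((hasDerivAt_id z).sub_const w).pow (m + 1)
    simp only [mul_one]
    simp at this
    exact this
  have h3 := (h1.div h2 (pow_ne_zero _ hzw)).deriv
  rw [show (fun z' => z' ^ p * wq / (z' - w) ^ (m + 1)) =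
    (fun z' => z' ^ p * wq) / fun z' => (z' - w) ^ (m + 1) from rfl, h3]
  have aux : ∀ u A B : ℂ, u ≠ 0 →
      (A * u ^ (m + 1) - B * (((m : ℂ) + 1) * u ^ m * 1)) / (u ^ (m + 1)) ^ 2
        = (A * u - ((m : ℂ) + 1) * B) / u ^ (m + 1 + 1) := by
    intro u A B hu
    field_simp
    ring
  rw [aux (z - w) _ _ hzw]
  push_cast
  congr 1
  ring

/-! ### `Rz`: rational representation in the first variable -/

def Rz (f : ℂ → ℂ → ℂ) : Prop :=
  ∀ w : ℂ, ∃ N : ℕ, ∃ Q : ℂ[X], Q.natDegree ≤ N ∧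
    (∀ z : ℂ, z ≠ w → f z w = Q.eval z / (z - w) ^ N) ∧ f w w = 0

lemma genRz (p q n : ℕ) (hn : 1 ≤ n) (hp : p ≤ n) :
    Rz (fun z w => z ^ p * w ^ q / (z - w) ^ n) := by
  intro w
  refine ⟨n, C (w ^ q) * X ^ p, ?_, ?_, ?_⟩
  · refine Polynomial.natDegree_mul_le.trans ?_
    simp only [Polynomial.natDegree_C, Polynomial.natDegree_X_pow, zero_add]
    exact hp
  · intro z hz
    simp only [Polynomial.eval_mul, Polynomial.eval_C, Polynomial.eval_pow, Polynomial.eval_X]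
    rw [mul_comm (w ^ q) (z ^ p)]
  · show w ^ p * w ^ q / (w - w) ^ n = 0
    rw [sub_self, zero_pow (by omega : n ≠ 0), div_zero]

lemma rz_deriv {f : ℂ → ℂ → ℂ} (hf : Rz f) (w : ℂ) : deriv (fun z' => f z' w) w = 0 := by
  obtain ⟨N, Q, h1, h2, h3⟩ := hf w
  exact derivDiag _ w N Q h1 h2 h3

lemma rzAdd {f g : ℂ → ℂ → ℂ} (hf : Rz f) (hg : Rz g) :
    Rz (fun z w => f z w + g z w) := by
  intro w
  obtain ⟨N1, Q1, hd1, he1, h01⟩ := hf w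
  obtain ⟨N2, Q2, hd2, he2, h02⟩ := hg w
  refine ⟨N1 + N2, Q1 * (X - C w) ^ N2 + Q2 * (X - C w) ^ N1, ?_, ?_, ?_⟩
  · have e1 : ((X - C w : ℂ[X]) ^ N2).natDegree = N2 := by
      rw [Polynomial.natDegree_pow, Polynomial.natDegree_X_sub_C, mul_one]
    have e2 : ((X - C w : ℂ[X]) ^ N1).natDegree = N1 := by
      rw [Polynomial.natDegree_pow, Polynomial.natDegree_X_sub_C, mul_one]
    refine (Polynomial.natDegree_add_le _ _).trans (max_le ?_ ?_)
    · exact Polynomial.natDegree_mul_le.trans (by omega)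
    · exact Polynomial.natDegree_mul_le.trans (by omega)
  · intro z hz
    have hzw : z - w ≠ 0 := sub_ne_zero.2 hz
    simp only [Polynomial.eval_add, Polynomial.eval_mul, Polynomial.eval_pow,
      Polynomial.eval_sub, Polynomial.eval_X, Polynomial.eval_C]
    rw [he1 z hz, he2 z hz]
    rw [div_add_div _ _ (pow_ne_zero N1 hzw) (pow_ne_zero N2 hzw), ← pow_add]
    ring_nf
  · show f w w + g w w = 0
    rw [h01, h02, add_zero]

lemma rzSmul (a : ℂ) {f : ℂ → ℂ → ℂ} (hf : Rz f) :
    Rz (fun z w => a * f z w) := by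
  intro w
  obtain ⟨N, Q, hd, he, h0⟩ := hf w
  refine ⟨N, C a * Q, ?_, ?_, ?_⟩
  · exact Polynomial.natDegree_mul_le.trans (by simp [Polynomial.natDegree_C]; omega)
  · intro z hz
    simp only [Polynomial.eval_mul, Polynomial.eval_C]
    rw [he z hz, mul_div_assoc]
  · show a * f w w = 0
    rw [h0, mul_zero]

/-! ### Operator identities on generators -/

lemma comb (d A B c1 c2 : ℂ) : c1 * (A / d) + c2 * (B / d) = (c1 * A + c2 * B) / d := by
  rw [mul_div_assoc', mul_div_assoc', ← add_div]

lemma O1gen (p q n : ℕ) (hn : 1 ≤ n) (hp : p ≤ n) :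
    O1 (fun z w => z ^ p * w ^ q / (z - w) ^ n) =
      ((p : ℂ) - n) • (fun z w : ℂ => z ^ p * w ^ q / (z - w) ^ (n + 1)) +
      (-(p : ℂ)) • (fun z w : ℂ => z ^ (p - 1) * w ^ (q + 1) / (z - w) ^ (n + 1)) := by
  funext z w
  simp only [O1, Pi.add_apply, Pi.smul_apply, smul_eq_mul]
  by_cases hz : z = w
  · rw [hz, rz_deriv (genRz p q n hn hp) w, sub_self, zero_pow (by omega : n + 1 ≠ 0)]
    simp
  · rw [core p n hn (w ^ q) z w hz, comb]
    congr 1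
    rcases p with _ | p'
    · simp
    · simp only [Nat.succ_sub_one]
      push_cast
      ring

lemma O2gen (p q n : ℕ) (hn : 1 ≤ n) (hp : p ≤ n) :
    O2 (fun z w => z ^ p * w ^ q / (z - w) ^ n) =
      ((p : ℂ) - n) • (fun z w : ℂ => z ^ (p + 1) * w ^ q / (z - w) ^ (n + 1)) +
      (-(p : ℂ)) • (fun z w : ℂ => z ^ p * w ^ (q + 1) / (z - w) ^ (n + 1)) := by
  funext z w
  simp only [O2, Pi.add_apply, Pi.smul_apply, smul_eq_mul]
  by_cases hz : z = w
  · rw [hz, rz_deriv (genRz p q n hn hp) w, sub_self, zero_pow (by omega : n + 1 ≠ 0)]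
    simp
  · rw [core p n hn (w ^ q) z w hz, mul_div_assoc', comb]
    congr 1
    rcases p with _ | p'
    · simp
      ring
    · simp only [Nat.succ_sub_one]
      push_cast
      ring

lemma O3gen (p q n : ℕ) (hn : 1 ≤ n) (hp : p ≤ n) :
    O3 (fun z w => z ^ p * w ^ q / (z - w) ^ n) =
      ((p : ℂ) - n) • (fun z w : ℂ => z ^ (p + 2) * w ^ q / (z - w) ^ (n + 1)) +
      (-(p : ℂ)) • (fun z w : ℂ => z ^ (p + 1) * w ^ (q + 1) / (z - w) ^ (n + 1)) := by
  funext z w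
  simp only [O3, Pi.add_apply, Pi.smul_apply, smul_eq_mul]
  by_cases hz : z = w
  · rw [hz, rz_deriv (genRz p q n hn hp) w, sub_self, zero_pow (by omega : n + 1 ≠ 0)]
    simp
  · rw [core p n hn (w ^ q) z w hz, mul_div_assoc', comb]
    congr 1
    rcases p with _ | p'
    · simp
      ring
    · simp only [Nat.succ_sub_one]
      push_cast
      ring

/-! ### Differentiability off the diagonal -/

def Dz (f : ℂ → ℂ → ℂ) : Prop :=
  ∀ z w : ℂ, z ≠ w → DifferentiableAt ℂ (fun z' => f z' w) z

lemma genDz (p q n : ℕ) : Dz (fun z w => z ^ p * w ^ q / (z - w) ^ n) := by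
  intro z w hz
  exact ((differentiableAt_pow p).mul_const _).div
    ((differentiableAt_id.sub_const w).pow n) (pow_ne_zero _ (sub_ne_zero.2 hz))

lemma derivAddPt {f g : ℂ → ℂ → ℂ} (hfD : Dz f) (hgD : Dz g) (hfR : Rz f) (hgR : Rz g)
    (z w : ℂ) :
    deriv (fun z' => f z' w + g z' w) z
      = deriv (fun z' => f z' w) z + deriv (fun z' => g z' w) z := by
  by_cases hz : z = w
  · subst hz
    rw [rz_deriv hfR, rz_deriv hgR, rz_deriv (rzAdd hfR hgR), add_zero]
  · exact deriv_add (hfD z w hz) (hgD z w hz)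

end Stmt14Aux

namespace Stmt14Aux

open Polynomial Filter Topology

lemma sup_eq_span : (⨆ m : ℕ, AnF m) =
    Submodule.span ℂ (⋃ n : ℕ, {f : ℂ → ℂ → ℂ | ∃ p q : ℕ, p ≤ n ∧ q ≤ n ∧ (p, q) ≠ (n, n) ∧
      f = fun z w => z ^ p * w ^ q / (z - w) ^ n}) := by
  rw [Submodule.span_iUnion]
  rfl

lemma gen_pos {n p q : ℕ} (hp : p ≤ n) (hq : q ≤ n) (hne : (p, q) ≠ (n, n)) : 1 ≤ n := by
  rcases Nat.eq_zero_or_pos n with h | h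
  · subst h
    have hp0 : p = 0 := by omega
    have hq0 : q = 0 := by omega
    rw [hp0, hq0] at hne
    exact absurd rfl hne
  · exact h

/-- The main induction: every element of `A` is differentiable off the diagonal,
has a rational representation, and its images under `O1, O2, O3` lie in `A`. -/
lemma goodAll {f : ℂ → ℂ → ℂ} (hf : f ∈ ⨆ m : ℕ, AnF m) :
    Dz f ∧ Rz f ∧ O1 f ∈ (⨆ m : ℕ, AnF m) ∧ O2 f ∈ (⨆ m : ℕ, AnF m) ∧
      O3 f ∈ (⨆ m : ℕ, AnF m) := by
  rw [sup_eq_span] at hf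
  induction hf using Submodule.span_induction with
  | mem x hx =>
    simp only [Set.mem_iUnion, Set.mem_setOf_eq] at hx
    obtain ⟨n, p, q, hp, hq, hne, rfl⟩ := hx
    have hn : 1 ≤ n := gen_pos hp hq hne
    refine ⟨genDz p q n, genRz p q n hn hp, ?_, ?_, ?_⟩
    · rw [O1gen p q n hn hp]
      exact add_mem
        (Submodule.smul_mem _ _ (genA' (by omega) (by omega) (by omega)))
        (Submodule.smul_mem _ _ (genA' (by omega) (by omega) (by omega)))
    · rw [O2gen p q n hn hp]
      exact add_mem
        (Submodule.smul_mem _ _ (genA' (by omega) (by omega) (by omega)))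
        (Submodule.smul_mem _ _ (genA' (by omega) (by omega) (by omega)))
    · rw [O3gen p q n hn hp]
      refine add_mem ?_
        (Submodule.smul_mem _ _ (genA' (by omega) (by omega) (by omega)))
      by_cases hpn : p = n
      · have hc : ((p : ℂ) - n) = 0 := by rw [hpn]; ring
        rw [hc, zero_smul]
        exact zero_mem _
      · exact Submodule.smul_mem _ _ (genA' (by omega) (by omega) (by omega))
  | zero =>
    have hD : Dz 0 := fun z w _ => by
      simp only [Pi.zero_apply]
      exact differentiableAt_const (0 : ℂ)
    have hR : Rz 0 := fun w => ⟨0, 0, by simp, fun z hz => by simp, by simp⟩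
    have h1 : O1 (0 : ℂ → ℂ → ℂ) = 0 := by
      funext z w
      simp [O1]
    have h2 : O2 (0 : ℂ → ℂ → ℂ) = 0 := by
      funext z w
      simp [O2]
    have h3 : O3 (0 : ℂ → ℂ → ℂ) = 0 := by
      funext z w
      simp [O3]
    exact ⟨hD, hR, by rw [h1]; exact zero_mem _, by rw [h2]; exact zero_mem _,
      by rw [h3]; exact zero_mem _⟩
  | add x y hx hy ihx ihy =>
    obtain ⟨hxD, hxR, hx1, hx2, hx3⟩ := ihx
    obtain ⟨hyD, hyR, hy1, hy2, hy3⟩ := ihy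
    have hD : Dz (x + y) := fun z w hz => (hxD z w hz).add (hyD z w hz)
    have hR : Rz (x + y) := rzAdd hxR hyR
    have e1 : O1 (x + y) = O1 x + O1 y := by
      funext z w
      simp only [O1, Pi.add_apply]
      exact derivAddPt hxD hyD hxR hyR z w
    have e2 : O2 (x + y) = O2 x + O2 y := by
      funext z w
      simp only [O2, Pi.add_apply]
      rw [derivAddPt hxD hyD hxR hyR z w]
      ring
    have e3 : O3 (x + y) = O3 x + O3 y := by
      funext z w
      simp only [O3, Pi.add_apply]
      rw [derivAddPt hxD hyD hxR hyR z w]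
      ring
    exact ⟨hD, hR, by rw [e1]; exact add_mem hx1 hy1, by rw [e2]; exact add_mem hx2 hy2,
      by rw [e3]; exact add_mem hx3 hy3⟩
  | smul a x hx ihx =>
    obtain ⟨hxD, hxR, hx1, hx2, hx3⟩ := ihx
    have hD : Dz (a • x) := fun z w hz => (hxD z w hz).const_mul a
    have hR : Rz (a • x) := rzSmul a hxR
    have e1 : O1 (a • x) = a • O1 x := by
      funext z w
      simp only [O1, Pi.smul_apply, smul_eq_mul]
      exact deriv_const_mul_field a
    have e2 : O2 (a • x) = a • O2 x := by
      funext z w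
      simp only [O2, Pi.smul_apply, smul_eq_mul]
      rw [deriv_const_mul_field a]
      ring
    have e3 : O3 (a • x) = a • O3 x := by
      funext z w
      simp only [O3, Pi.smul_apply, smul_eq_mul]
      rw [deriv_const_mul_field a]
      ring
    exact ⟨hD, hR, by rw [e1]; exact Submodule.smul_mem _ a hx1,
      by rw [e2]; exact Submodule.smul_mem _ a hx2,
      by rw [e3]; exact Submodule.smul_mem _ a hx3⟩

/-- `A` is invariant under swapping the two variables. -/
lemma swapMem {f : ℂ → ℂ → ℂ} (hf : f ∈ ⨆ m : ℕ, AnF m) :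
    (fun z w => f w z) ∈ ⨆ m : ℕ, AnF m := by
  rw [sup_eq_span] at hf
  induction hf using Submodule.span_induction with
  | mem x hx =>
    simp only [Set.mem_iUnion, Set.mem_setOf_eq] at hx
    obtain ⟨n, p, q, hp, hq, hne, rfl⟩ := hx
    have key : (fun z w : ℂ => w ^ p * z ^ q / (w - z) ^ n) =
        ((-1 : ℂ) ^ n) • (fun z w : ℂ => z ^ q * w ^ p / (z - w) ^ n) := by
      funext z w
      simp only [Pi.smul_apply, smul_eq_mul]
      have h1 : (w - z) ^ n = (-1 : ℂ) ^ n * (z - w) ^ n := by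
        rw [show w - z = -(z - w) by ring, neg_pow]
      have h2 : ((-1 : ℂ) ^ n) * ((-1 : ℂ) ^ n) = 1 := by
        rw [← mul_pow]; norm_num
      rw [h1, mul_comm ((-1 : ℂ) ^ n) ((z - w) ^ n), ← div_div, div_eq_mul_inv _ ((-1 : ℂ) ^ n),
        ← eq_inv_of_mul_eq_one_left h2]
      ring
    show (fun z w : ℂ => w ^ p * z ^ q / (w - z) ^ n) ∈ ⨆ m : ℕ, AnF m
    rw [key]
    refine Submodule.smul_mem _ _ (genA hq hp ?_)
    simp only [ne_eq, Prod.mk.injEq, not_and] at hne ⊢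
    intro h1 h2
    exact hne h2 h1
  | zero =>
    show (fun _ _ : ℂ => (0 : ℂ)) ∈ ⨆ m : ℕ, AnF m
    exact zero_mem _
  | add x y hx hy ihx ihy =>
    have : (fun z w => (x + y) w z) = (fun z w => x w z) + fun z w => y w z := rfl
    rw [this]
    exact add_mem ihx ihy
  | smul a x hx ihx =>
    have : (fun z w => (a • x) w z) = a • fun z w => x w z := rfl
    rw [this]
    exact Submodule.smul_mem _ a ihx

end Stmt14Aux

/-- The space `A = ∑_n A_n` is invariant under each of the six operators
`∂_z, z∂_z, z²∂_z, ∂_z̄, z̄∂_z̄, z̄²∂_z̄`. -/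
theorem stmt14 (o : (ℂ → ℂ → ℂ) → (ℂ → ℂ → ℂ))
    (ho : o ∈ ({O1, O2, O3, O4, O5, O6} : Set ((ℂ → ℂ → ℂ) → (ℂ → ℂ → ℂ))))
    (f : ℂ → ℂ → ℂ) (hf : f ∈ ⨆ n : ℕ, AnF n) :
    o f ∈ ⨆ n : ℕ, AnF n := by
  open Stmt14Aux in
  have hswap := Stmt14Aux.swapMem hf
  have hg := Stmt14Aux.goodAll hf
  have hgs := Stmt14Aux.goodAll hswap
  simp only [Set.mem_insert_iff, Set.mem_singleton_iff] at ho
  rcases ho with rfl | rfl | rfl | rfl | rfl | rfl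
  · exact hg.2.2.1
  · exact hg.2.2.2.1
  · exact hg.2.2.2.2
  · have : O4 f = fun z w => (O1 fun a b => f b a) w z := rfl
    rw [this]
    exact Stmt14Aux.swapMem hgs.2.2.1
  · have : O5 f = fun z w => (O2 fun a b => f b a) w z := rfl
    rw [this]
    exact Stmt14Aux.swapMem hgs.2.2.2.1
  · have : O6 f = fun z w => (O3 fun a b => f b a) w z := rfl
    rw [this]
    exact Stmt14Aux.swapMem hgs.2.2.2.2
end

section
/- The function 1/(z - z̄) is a cyclic vector for the family of operators ∂_z, z∂_z, z²∂_z, ∂_z̄, z̄∂_z̄, z̄²∂_z̄ acting on A = ∑_n A_n: the linear span of all images of 1/(z - z̄) under arbitrary finite products of these operators equals A. -/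
open Finset

private lemma contP (a : ℂ) (k : ℕ) : Continuous (fun z : ℂ => (z-a)^k) :=
  (continuous_id.sub continuous_const).pow k

lemma aux_vanish (a : ℂ) (N : ℕ) : ∀ (c : ℕ → ℂ) (F : ℂ → ℂ),
    (∀ z, z ≠ a → F z = ∑ m ∈ Finset.range (N+1), c m / (z-a)^m) →
    ContinuousAt F a → F a = 0 → ∀ z, F z = 0 := by
  induction N with
  | zero =>
    intro c F h hc h0
    have h1 : Filter.Tendsto F (nhdsWithin a {a}ᶜ) (nhds (c 0)) := by
      apply tendsto_const_nhds.congr'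
      filter_upwards [self_mem_nhdsWithin] with z hz
      rw [h z hz]; simp
    have h2 : Filter.Tendsto F (nhdsWithin a {a}ᶜ) (nhds 0) := by
      have h3 := hc.tendsto.mono_left (nhdsWithin_le_nhds (s := {a}ᶜ))
      rwa [h0] at h3
    have hc0 : c 0 = 0 := tendsto_nhds_unique h1 h2
    intro z
    by_cases hz : z = a
    · rw [hz, h0]
    · rw [h z hz]; simp [hc0]
  | succ N ih =>
    intro c F h hc h0
    have key : ∀ z, z ≠ a → F z * (z-a)^(N+1) = ∑ m ∈ Finset.range (N+2), c m * (z-a)^(N+1-m) := by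
      intro z hz
      have hza : z - a ≠ 0 := sub_ne_zero.2 hz
      rw [h z hz, Finset.sum_mul]
      apply Finset.sum_congr rfl
      intro m hm
      have hm' : m ≤ N + 1 := by
        have := Finset.mem_range.1 hm; omega
      rw [div_mul_eq_mul_div, eq_comm, eq_div_iff (pow_ne_zero _ hza), mul_assoc, ← pow_add]
      have he : N+1-m+m = N+1 := by omega
      rw [he]
    have t1 : Filter.Tendsto (fun z => F z * (z-a)^(N+1)) (nhdsWithin a {a}ᶜ) (nhds 0) := by
      have hF : Filter.Tendsto F (nhds a) (nhds 0) := h0 ▸ hc.tendsto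
      have hP : Filter.Tendsto (fun z : ℂ => (z-a)^(N+1)) (nhds a) (nhds 0) := by
        have h4 := (contP a (N+1)).tendsto a
        simpa using h4
      have h5 := hF.mul hP
      rw [mul_zero] at h5
      exact h5.mono_left (nhdsWithin_le_nhds (s := {a}ᶜ))
    have t2 : Filter.Tendsto (fun z => F z * (z-a)^(N+1)) (nhdsWithin a {a}ᶜ) (nhds (c (N+1))) := by
      have cont : Filter.Tendsto (fun z : ℂ => ∑ m ∈ Finset.range (N+2), c m * (z-a)^(N+1-m)) (nhds a) (nhds (c (N+1))) := by
        have hcont : Continuous (fun z : ℂ => ∑ m ∈ Finset.range (N+2), c m * (z-a)^(N+1-m)) :=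
          continuous_finset_sum _ (fun m _ => continuous_const.mul (contP a _))
        have h6 := hcont.tendsto a
        have hval : (∑ m ∈ Finset.range (N+2), c m * (a-a)^(N+1-m)) = c (N+1) := by
          rw [Finset.sum_eq_single (N+1)]
          · simp
          · intro m hm hne
            have h7 : N+1-m ≠ 0 := by have := Finset.mem_range.1 hm; omega
            simp [sub_self, zero_pow h7]
          · intro hmem; exact absurd (Finset.self_mem_range_succ (N+1)) hmem
        rwa [hval] at h6
      apply (cont.mono_left (nhdsWithin_le_nhds (s := {a}ᶜ))).congr'
      filter_upwards [self_mem_nhdsWithin] with z hz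
      exact (key z hz).symm
    have hcN : c (N+1) = 0 := tendsto_nhds_unique t2 t1
    apply ih c F _ hc h0
    intro z hz
    rw [h z hz, Finset.sum_range_succ, hcN, zero_div, add_zero]

lemma deriv_eq_zero_laurent (a : ℂ) (F : ℂ → ℂ) (N : ℕ) (c : ℕ → ℂ)
    (h : ∀ z, z ≠ a → F z = ∑ m ∈ Finset.range (N+1), c m / (z-a)^m)
    (h0 : F a = 0) : deriv F a = 0 := by
  by_cases hc : ContinuousAt F a
  · have hF : F = fun _ => 0 := funext (aux_vanish a N c F h hc h0)
    rw [hF]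
    exact deriv_const a 0
  · exact deriv_zero_of_not_differentiableAt (fun hd => hc hd.continuousAt)

noncomputable def genF (p q n : ℕ) : ℂ → ℂ → ℂ := fun z w => z^p * w^q / (z - w)^n

def GenSet : Set (ℂ → ℂ → ℂ) :=
  {f | ∃ p q n : ℕ, 1 ≤ n ∧ p ≤ n ∧ q ≤ n ∧ (p, q) ≠ (n, n) ∧ f = genF p q n}

noncomputable def VV : Submodule ℂ (ℂ → ℂ → ℂ) := Submodule.span ℂ GenSet

lemma pad_sum (N N' : ℕ) (h : N ≤ N') (c : ℕ → ℂ) (x : ℂ) :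
    ∑ m ∈ Finset.range (N+1), c m / x^m
      = ∑ m ∈ Finset.range (N'+1), (if m ≤ N then c m else 0)/x^m := by
  have h1 : ∑ m ∈ Finset.range (N'+1), (if m ≤ N then c m else 0)/x^m
      = ∑ m ∈ Finset.range (N+1), (if m ≤ N then c m else 0)/x^m :=
    (Finset.sum_subset (Finset.range_subset_range.2 (by omega))
      (fun m _ hm => by
        rw [if_neg (fun hc => hm (Finset.mem_range.2 (by omega))), zero_div])).symm
  rw [h1]
  exact Finset.sum_congr rfl (fun m hm => by
    rw [if_pos (by have := Finset.mem_range.1 hm; omega)])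

lemma genF_laurent (p q n : ℕ) (hpn : p ≤ n) (w : ℂ) :
    ∀ z, z ≠ w → genF p q n z w
      = ∑ m ∈ Finset.range (n+1),
          ((p.choose (n-m) : ℂ) * w^(p+q-(n-m))) / (z-w)^m := by
  intro z hz
  have hzw : z - w ≠ 0 := sub_ne_zero.2 hz
  have hrefl : ∑ m ∈ Finset.range (n+1),
      ((p.choose (n-m) : ℂ) * w^(p+q-(n-m))) / (z-w)^m
      = ∑ k ∈ Finset.range (n+1), ((p.choose k : ℂ) * w^(p+q-k)) / (z-w)^(n-k) := by
    rw [← Finset.sum_range_reflect]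
    apply Finset.sum_congr rfl
    intro k hk
    have hk' : k ≤ n := by have := Finset.mem_range.1 hk; omega
    have e : n - (n + 1 - 1 - k) = k := by omega
    have e2 : n + 1 - 1 - k = n - k := by omega
    rw [e2, show n - (n-k) = k by omega]
  rw [hrefl]
  have expand : z^p = ∑ k ∈ Finset.range (p+1), (z-w)^k * w^(p-k) * (p.choose k : ℂ) := by
    have h := add_pow (z-w) w p
    rw [sub_add_cancel] at h
    exact h
  have lhs : genF p q n z w
      = ∑ k ∈ Finset.range (p+1), ((z-w)^k * w^(p-k) * (p.choose k : ℂ)) * w^q / (z-w)^n := by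
    show z^p * w^q / (z-w)^n = _
    rw [expand, Finset.sum_mul, Finset.sum_div]
  rw [lhs]
  have step : ∀ k ∈ Finset.range (p+1),
      ((z-w)^k * w^(p-k) * (p.choose k : ℂ)) * w^q / (z-w)^n
        = ((p.choose k : ℂ) * w^(p+q-k)) / (z-w)^(n-k) := by
    intro k hk
    have hkp : k ≤ p := by have := Finset.mem_range.1 hk; omega
    have e1 : w^(p-k) * w^q = w^(p+q-k) := by rw [← pow_add]; congr 1; omega
    have e2 : (z-w)^n = (z-w)^(n-k) * (z-w)^k := by rw [← pow_add]; congr 1; omega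
    rw [e2, div_eq_div_iff (mul_ne_zero (pow_ne_zero _ hzw) (pow_ne_zero _ hzw))
      (pow_ne_zero _ hzw), ← e1]
    ring
  rw [Finset.sum_congr rfl step]
  exact Finset.sum_subset (Finset.range_subset_range.2 (by omega))
    (fun k _ hk => by
      have : p < k := by
        by_contra hc
        exact hk (Finset.mem_range.2 (by omega))
      rw [Nat.choose_eq_zero_of_lt this]
      simp)

lemma genF_laurentW (p q n : ℕ) (hqn : q ≤ n) (z : ℂ) :
    ∀ w, w ≠ z → genF p q n z w
      = ∑ m ∈ Finset.range (n+1),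
          ((-1)^n * (q.choose (n-m) : ℂ) * z^(p+q-(n-m))) / (w-z)^m := by
  intro w hw
  have hwz : w - z ≠ 0 := sub_ne_zero.2 hw
  have hsign : (z - w)^n = (-1)^n * (w-z)^n := by
    rw [show z - w = -(w-z) by ring, neg_pow]
  have hrefl : ∑ m ∈ Finset.range (n+1),
      ((-1)^n * (q.choose (n-m) : ℂ) * z^(p+q-(n-m))) / (w-z)^m
      = ∑ k ∈ Finset.range (n+1), ((-1)^n * (q.choose k : ℂ) * z^(p+q-k)) / (w-z)^(n-k) := by
    rw [← Finset.sum_range_reflect]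
    apply Finset.sum_congr rfl
    intro k hk
    have hk' : k ≤ n := by have := Finset.mem_range.1 hk; omega
    have e2 : n + 1 - 1 - k = n - k := by omega
    rw [e2, show n - (n-k) = k by omega]
  rw [hrefl]
  have expand : w^q = ∑ k ∈ Finset.range (q+1), (w-z)^k * z^(q-k) * (q.choose k : ℂ) := by
    have h := add_pow (w-z) z q
    rw [sub_add_cancel] at h
    exact h
  have lhs : genF p q n z w
      = ∑ k ∈ Finset.range (q+1), z^p * ((w-z)^k * z^(q-k) * (q.choose k : ℂ)) / (z-w)^n := by
    show z^p * w^q / (z-w)^n = _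
    rw [expand, Finset.mul_sum, Finset.sum_div]
  rw [lhs]
  have step : ∀ k ∈ Finset.range (q+1),
      z^p * ((w-z)^k * z^(q-k) * (q.choose k : ℂ)) / (z-w)^n
        = ((-1)^n * (q.choose k : ℂ) * z^(p+q-k)) / (w-z)^(n-k) := by
    intro k hk
    have hkq : k ≤ q := by have := Finset.mem_range.1 hk; omega
    have e1 : z^p * z^(q-k) = z^(p+q-k) := by rw [← pow_add]; congr 1; omega
    have e2 : (w-z)^n = (w-z)^(n-k) * (w-z)^k := by rw [← pow_add]; congr 1; omega
    have hne : ((-1:ℂ))^n ≠ 0 := pow_ne_zero _ (by norm_num)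
    rw [hsign, e2, div_eq_div_iff
      (mul_ne_zero hne (mul_ne_zero (pow_ne_zero _ hwz) (pow_ne_zero _ hwz)))
      (pow_ne_zero _ hwz), ← e1]
    ring_nf
    have hs2 : ((-1:ℂ))^(n*2) = 1 := Even.neg_one_pow ⟨n, by ring⟩
    rw [hs2]
    ring
  rw [Finset.sum_congr rfl step]
  exact Finset.sum_subset (Finset.range_subset_range.2 (by omega))
    (fun k _ hk => by
      have : q < k := by
        by_contra hc
        exact hk (Finset.mem_range.2 (by omega))
      rw [Nat.choose_eq_zero_of_lt this]
      simp)

lemma hasDerivAt_zterm (p n : ℕ) (C z w : ℂ) (hz : z ≠ w) :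
    HasDerivAt (fun t => t^p * C / (t-w)^n)
      (↑p * z^(p-1) * C/(z-w)^n - ↑n * z^p * C/(z-w)^(n+1)) z := by
  have hzw : z - w ≠ 0 := sub_ne_zero.2 hz
  have h1 : HasDerivAt (fun t : ℂ => t^p * C) (↑p * z^(p-1) * C) z :=
    (hasDerivAt_pow p z).mul_const C
  have h2 : HasDerivAt (fun t : ℂ => (t-w)^n) (↑n * (z-w)^(n-1) * 1) z :=
    ((hasDerivAt_id z).sub_const w).pow n
  have h3 : HasDerivAt (fun t => t^p * C / (t-w)^n) _ z := h1.div h2 (pow_ne_zero n hzw)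
  convert h3 using 1
  rcases n with _ | m
  · simp
  · have hm : m + 1 - 1 = m := rfl
    rw [hm]
    field_simp
    ring

lemma hasDerivAt_wterm (q n : ℕ) (C z w : ℂ) (hw : w ≠ z) :
    HasDerivAt (fun t => C * t^q / (z-t)^n)
      (↑q * C * w^(q-1)/(z-w)^n + ↑n * C * w^q/(z-w)^(n+1)) w := by
  have hzw : z - w ≠ 0 := sub_ne_zero.2 (fun h => hw (by linear_combination -h))
  have h1 : HasDerivAt (fun t : ℂ => C * t^q) (C * (↑q * w^(q-1))) w :=
    (hasDerivAt_pow q w).const_mul C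
  have h2 : HasDerivAt (fun t : ℂ => (z-t)^n) (↑n * (z-w)^(n-1) * (-1)) w :=
    ((hasDerivAt_id w).const_sub z).pow n
  have h3 : HasDerivAt (fun t => C * t^q / (z-t)^n) _ w := h1.div h2 (pow_ne_zero n hzw)
  convert h3 using 1
  rcases n with _ | m
  · simp; ring
  · have hm : m + 1 - 1 = m := rfl
    rw [hm]
    field_simp
    ring
lemma memVV_diag {f : ℂ → ℂ → ℂ} (hf : f ∈ VV) : ∀ x : ℂ, f x x = 0 := by
  induction hf using Submodule.span_induction with
  | mem f hf =>
    obtain ⟨p, q, n, hn, hp, hq, hne, rfl⟩ := hf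
    intro x
    show x^p * x^q / (x-x)^n = 0
    rw [sub_self, zero_pow (by omega), div_zero]
  | zero => intro x; rfl
  | add f g _ _ hf hg => intro x; show f x x + g x x = 0; rw [hf x, hg x, add_zero]
  | smul a f _ hf => intro x; show a * f x x = 0; rw [hf x, mul_zero]

lemma memVV_LZ {f : ℂ → ℂ → ℂ} (hf : f ∈ VV) :
    ∀ w : ℂ, ∃ N : ℕ, ∃ c : ℕ → ℂ, ∀ z, z ≠ w →
      f z w = ∑ m ∈ Finset.range (N+1), c m / (z-w)^m := by
  induction hf using Submodule.span_induction with
  | mem f hf =>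
    obtain ⟨p, q, n, hn, hp, hq, hne, rfl⟩ := hf
    intro w
    exact ⟨n, _, genF_laurent p q n hp w⟩
  | zero =>
    intro w
    exact ⟨0, fun _ => 0, fun z hz => by simp⟩
  | add f g _ _ hf hg =>
    intro w
    obtain ⟨N1, c1, h1⟩ := hf w
    obtain ⟨N2, c2, h2⟩ := hg w
    refine ⟨max N1 N2, fun m => (if m ≤ N1 then c1 m else 0) + (if m ≤ N2 then c2 m else 0), ?_⟩
    intro z hz
    show f z w + g z w = _
    rw [h1 z hz, h2 z hz, pad_sum N1 (max N1 N2) (le_max_left _ _) c1 (z-w),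
      pad_sum N2 (max N1 N2) (le_max_right _ _) c2 (z-w), ← Finset.sum_add_distrib]
    exact Finset.sum_congr rfl (fun m _ => (add_div _ _ _).symm)
  | smul a f _ hf =>
    intro w
    obtain ⟨N, c, h⟩ := hf w
    refine ⟨N, fun m => a * c m, ?_⟩
    intro z hz
    show a * f z w = _
    rw [h z hz, Finset.mul_sum]
    exact Finset.sum_congr rfl (fun m _ => (mul_div_assoc _ _ _).symm)

lemma memVV_LW {f : ℂ → ℂ → ℂ} (hf : f ∈ VV) :
    ∀ z : ℂ, ∃ N : ℕ, ∃ c : ℕ → ℂ, ∀ w, w ≠ z →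
      f z w = ∑ m ∈ Finset.range (N+1), c m / (w-z)^m := by
  induction hf using Submodule.span_induction with
  | mem f hf =>
    obtain ⟨p, q, n, hn, hp, hq, hne, rfl⟩ := hf
    intro z
    exact ⟨n, _, genF_laurentW p q n hq z⟩
  | zero =>
    intro z
    exact ⟨0, fun _ => 0, fun w hw => by simp⟩
  | add f g _ _ hf hg =>
    intro z
    obtain ⟨N1, c1, h1⟩ := hf z
    obtain ⟨N2, c2, h2⟩ := hg z
    refine ⟨max N1 N2, fun m => (if m ≤ N1 then c1 m else 0) + (if m ≤ N2 then c2 m else 0), ?_⟩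
    intro w hw
    show f z w + g z w = _
    rw [h1 w hw, h2 w hw, pad_sum N1 (max N1 N2) (le_max_left _ _) c1 (w-z),
      pad_sum N2 (max N1 N2) (le_max_right _ _) c2 (w-z), ← Finset.sum_add_distrib]
    exact Finset.sum_congr rfl (fun m _ => (add_div _ _ _).symm)
  | smul a f _ hf =>
    intro z
    obtain ⟨N, c, h⟩ := hf z
    refine ⟨N, fun m => a * c m, ?_⟩
    intro w hw
    show a * f z w = _
    rw [h w hw, Finset.mul_sum]
    exact Finset.sum_congr rfl (fun m _ => (mul_div_assoc _ _ _).symm)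

lemma memVV_derivz_pole {f : ℂ → ℂ → ℂ} (hf : f ∈ VV) (w : ℂ) :
    deriv (fun z => f z w) w = 0 := by
  obtain ⟨N, c, h⟩ := memVV_LZ hf w
  exact deriv_eq_zero_laurent w (fun z => f z w) N c h (memVV_diag hf w)

lemma memVV_derivw_pole {f : ℂ → ℂ → ℂ} (hf : f ∈ VV) (z : ℂ) :
    deriv (fun w => f z w) z = 0 := by
  obtain ⟨N, c, h⟩ := memVV_LW hf z
  exact deriv_eq_zero_laurent z (fun w => f z w) N c h (memVV_diag hf z)

lemma memVV_diffz {f : ℂ → ℂ → ℂ} (hf : f ∈ VV) :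
    ∀ w z : ℂ, z ≠ w → DifferentiableAt ℂ (fun z' => f z' w) z := by
  induction hf using Submodule.span_induction with
  | mem f hf =>
    obtain ⟨p, q, n, hn, hp, hq, hne, rfl⟩ := hf
    intro w z hz
    exact (hasDerivAt_zterm p n (w^q) z w hz).differentiableAt
  | zero => intro w z _; simpa using (differentiableAt_const (0:ℂ))
  | add f g _ _ hf hg =>
    intro w z hz
    exact (hf w z hz).add (hg w z hz)
  | smul a f _ hf =>
    intro w z hz
    exact (hf w z hz).const_smul a

lemma memVV_diffw {f : ℂ → ℂ → ℂ} (hf : f ∈ VV) :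
    ∀ z w : ℂ, w ≠ z → DifferentiableAt ℂ (fun w' => f z w') w := by
  induction hf using Submodule.span_induction with
  | mem f hf =>
    obtain ⟨p, q, n, hn, hp, hq, hne, rfl⟩ := hf
    intro z w hw
    exact (hasDerivAt_wterm q n (z^p) z w hw).differentiableAt
  | zero => intro z w _; simpa using (differentiableAt_const (0:ℂ))
  | add f g _ _ hf hg =>
    intro z w hw
    exact (hf z w hw).add (hg z w hw)
  | smul a f _ hf =>
    intro z w hw
    exact (hf z w hw).const_smul a

lemma derivz_add {f g : ℂ → ℂ → ℂ} (hf : f ∈ VV) (hg : g ∈ VV) (w z : ℂ) :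
    deriv (fun z' => f z' w + g z' w) z
      = deriv (fun z' => f z' w) z + deriv (fun z' => g z' w) z := by
  by_cases hz : z = w
  · subst hz
    have hs := memVV_derivz_pole (add_mem hf hg) z
    simp only [Pi.add_apply] at hs
    rw [hs, memVV_derivz_pole hf z, memVV_derivz_pole hg z, add_zero]
  · exact deriv_add (memVV_diffz hf w z hz) (memVV_diffz hg w z hz)

lemma derivz_smul {f : ℂ → ℂ → ℂ} (hf : f ∈ VV) (a : ℂ) (w z : ℂ) :
    deriv (fun z' => a * f z' w) z = a * deriv (fun z' => f z' w) z := by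
  by_cases hz : z = w
  · subst hz
    have hs := memVV_derivz_pole (Submodule.smul_mem VV a hf) z
    simp only [Pi.smul_apply, smul_eq_mul] at hs
    rw [hs, memVV_derivz_pole hf z, mul_zero]
  · exact deriv_const_mul a (memVV_diffz hf w z hz)

lemma derivw_add {f g : ℂ → ℂ → ℂ} (hf : f ∈ VV) (hg : g ∈ VV) (z w : ℂ) :
    deriv (fun w' => f z w' + g z w') w
      = deriv (fun w' => f z w') w + deriv (fun w' => g z w') w := by
  by_cases hw : w = z
  · subst hw
    have hs := memVV_derivw_pole (add_mem hf hg) w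
    simp only [Pi.add_apply] at hs
    rw [hs, memVV_derivw_pole hf w, memVV_derivw_pole hg w, add_zero]
  · exact deriv_add (memVV_diffw hf z w hw) (memVV_diffw hg z w hw)

lemma derivw_smul {f : ℂ → ℂ → ℂ} (hf : f ∈ VV) (a : ℂ) (z w : ℂ) :
    deriv (fun w' => a * f z w') w = a * deriv (fun w' => f z w') w := by
  by_cases hw : w = z
  · subst hw
    have hs := memVV_derivw_pole (Submodule.smul_mem VV a hf) w
    simp only [Pi.smul_apply, smul_eq_mul] at hs
    rw [hs, memVV_derivw_pole hf w, mul_zero]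
  · exact deriv_const_mul a (memVV_diffw hf z w hw)
lemma genF_diag (p q n : ℕ) (hn : 1 ≤ n) (x : ℂ) : genF p q n x x = 0 := by
  show x^p * x^q / (x-x)^n = 0
  rw [sub_self, zero_pow (by omega), div_zero]

lemma genF_mono (p q n : ℕ) (hn : 1 ≤ n) : genF p q n = genF (p+1) q (n+1) - genF p (q+1) (n+1) := by
  funext z w
  show z^p * w^q / (z-w)^n = z^(p+1) * w^q/(z-w)^(n+1) - z^p * w^(q+1)/(z-w)^(n+1)
  by_cases hz : z = w
  · subst hz
    rw [sub_self, zero_pow (by omega : n+1 ≠ 0), div_zero, div_zero, sub_zero,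
      zero_pow (by omega : n ≠ 0), div_zero]
  · have hzw : z - w ≠ 0 := sub_ne_zero.2 hz
    field_simp
    ring

lemma corner_memVV (n : ℕ) (hn : 1 ≤ n) : genF n n n ∈ VV := by
  rw [genF_mono n n n hn]
  exact sub_mem
    (Submodule.subset_span ⟨n+1, n, n+1, by omega, by omega, by omega,
      by intro hcon; rw [Prod.mk.injEq] at hcon; omega, rfl⟩)
    (Submodule.subset_span ⟨n, n+1, n+1, by omega, by omega, by omega,
      by intro hcon; rw [Prod.mk.injEq] at hcon; omega, rfl⟩)

lemma genF_memVV (p q n : ℕ) (hn : 1 ≤ n) (hp : p ≤ n) (hq : q ≤ n) :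
    genF p q n ∈ VV := by
  by_cases hne : (p, q) = (n, n)
  · rw [Prod.mk.injEq] at hne
    rw [show p = n from hne.1, show q = n from hne.2]
    exact corner_memVV n hn
  · exact Submodule.subset_span ⟨p, q, n, hn, hp, hq, hne, rfl⟩

lemma O1_genF (p q n : ℕ) (hn : 1 ≤ n) (hp : p ≤ n) (hq : q ≤ n) :
    O1 (genF p q n) = (p:ℂ) • genF (p-1) q n - (n:ℂ) • genF p q (n+1) := by
  have hmem := genF_memVV p q n hn hp hq
  funext z w
  show deriv (fun z' => genF p q n z' w) z
      = (p:ℂ) * genF (p-1) q n z w - (n:ℂ) * genF p q (n+1) z w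
  by_cases hz : z = w
  · subst hz
    rw [memVV_derivz_pole hmem z, genF_diag _ _ _ hn, genF_diag _ _ _ (by omega)]
    ring
  · have hd := (hasDerivAt_zterm p n (w^q) z w hz).deriv
    rw [show (fun z' => genF p q n z' w) = (fun t => t^p * w^q/(t-w)^n) from rfl, hd]
    show _ = (p:ℂ) * (z^(p-1) * w^q / (z-w)^n) - (n:ℂ) * (z^p*w^q/(z-w)^(n+1))
    ring

lemma O2_genF (p q n : ℕ) (hn : 1 ≤ n) (hp : p ≤ n) (hq : q ≤ n) :
    O2 (genF p q n) = (p:ℂ) • genF p q n - (n:ℂ) • genF (p+1) q (n+1) := by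
  have hmem := genF_memVV p q n hn hp hq
  funext z w
  show z * deriv (fun z' => genF p q n z' w) z
      = (p:ℂ) * genF p q n z w - (n:ℂ) * genF (p+1) q (n+1) z w
  by_cases hz : z = w
  · subst hz
    rw [memVV_derivz_pole hmem z, genF_diag _ _ _ hn, genF_diag _ _ _ (by omega)]
    ring
  · have hd := (hasDerivAt_zterm p n (w^q) z w hz).deriv
    rw [show (fun z' => genF p q n z' w) = (fun t => t^p * w^q/(t-w)^n) from rfl, hd]
    show _ = (p:ℂ) * (z^p * w^q / (z-w)^n) - (n:ℂ) * (z^(p+1)*w^q/(z-w)^(n+1))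
    rcases p with _ | k
    · push_cast; ring
    · simp only [Nat.add_sub_cancel]
      push_cast
      ring

lemma O3_genF_low (p q n : ℕ) (hn : 1 ≤ n) (hp : p ≤ n) (hq : q ≤ n) :
    O3 (genF p q n) = (p:ℂ) • genF (p+1) q n - (n:ℂ) • genF (p+2) q (n+1) := by
  have hmem := genF_memVV p q n hn hp hq
  funext z w
  show z^2 * deriv (fun z' => genF p q n z' w) z
      = (p:ℂ) * genF (p+1) q n z w - (n:ℂ) * genF (p+2) q (n+1) z w
  by_cases hz : z = w
  · subst hz
    rw [memVV_derivz_pole hmem z, genF_diag _ _ _ hn, genF_diag _ _ _ (by omega)]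
    ring
  · have hd := (hasDerivAt_zterm p n (w^q) z w hz).deriv
    rw [show (fun z' => genF p q n z' w) = (fun t => t^p * w^q/(t-w)^n) from rfl, hd]
    show _ = (p:ℂ) * (z^(p+1) * w^q / (z-w)^n) - (n:ℂ) * (z^(p+2)*w^q/(z-w)^(n+1))
    rcases p with _ | k
    · push_cast; ring
    · simp only [Nat.add_sub_cancel]
      push_cast
      ring

lemma O3_genF_top (q n : ℕ) (hn : 1 ≤ n) (hq : q ≤ n) :
    O3 (genF n q n) = -((n:ℂ) • genF (n+1) (q+1) (n+1)) := by
  have hmem := genF_memVV n q n hn le_rfl hq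
  funext z w
  show z^2 * deriv (fun z' => genF n q n z' w) z
      = -((n:ℂ) * genF (n+1) (q+1) (n+1) z w)
  by_cases hz : z = w
  · subst hz
    rw [memVV_derivz_pole hmem z, genF_diag _ _ _ (by omega)]
    ring
  · have hd := (hasDerivAt_zterm n n (w^q) z w hz).deriv
    rw [show (fun z' => genF n q n z' w) = (fun t => t^n * w^q/(t-w)^n) from rfl, hd]
    show _ = -((n:ℂ) * (z^(n+1) * w^(q+1) / (z-w)^(n+1)))
    have hzw : z - w ≠ 0 := sub_ne_zero.2 hz
    rcases n with _ | m
    · omega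
    · simp only [Nat.add_sub_cancel]
      push_cast
      field_simp
      ring

lemma O4_genF (p q n : ℕ) (hn : 1 ≤ n) (hp : p ≤ n) (hq : q ≤ n) :
    O4 (genF p q n) = (q:ℂ) • genF p (q-1) n + (n:ℂ) • genF p q (n+1) := by
  have hmem := genF_memVV p q n hn hp hq
  funext z w
  show deriv (fun w' => genF p q n z w') w
      = (q:ℂ) * genF p (q-1) n z w + (n:ℂ) * genF p q (n+1) z w
  by_cases hw : w = z
  · subst hw
    rw [memVV_derivw_pole hmem w, genF_diag _ _ _ hn, genF_diag _ _ _ (by omega)]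
    ring
  · have hd := (hasDerivAt_wterm q n (z^p) z w hw).deriv
    rw [show (fun w' => genF p q n z w') = (fun t => z^p * t^q/(z-t)^n) from rfl, hd]
    show _ = (q:ℂ) * (z^p * w^(q-1) / (z-w)^n) + (n:ℂ) * (z^p*w^q/(z-w)^(n+1))
    ring

lemma O5_genF (p q n : ℕ) (hn : 1 ≤ n) (hp : p ≤ n) (hq : q ≤ n) :
    O5 (genF p q n) = (q:ℂ) • genF p q n + (n:ℂ) • genF p (q+1) (n+1) := by
  have hmem := genF_memVV p q n hn hp hq
  funext z w
  show w * deriv (fun w' => genF p q n z w') w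
      = (q:ℂ) * genF p q n z w + (n:ℂ) * genF p (q+1) (n+1) z w
  by_cases hw : w = z
  · subst hw
    rw [memVV_derivw_pole hmem w, genF_diag _ _ _ hn, genF_diag _ _ _ (by omega)]
    ring
  · have hd := (hasDerivAt_wterm q n (z^p) z w hw).deriv
    rw [show (fun w' => genF p q n z w') = (fun t => z^p * t^q/(z-t)^n) from rfl, hd]
    show _ = (q:ℂ) * (z^p * w^q / (z-w)^n) + (n:ℂ) * (z^p*w^(q+1)/(z-w)^(n+1))
    rcases q with _ | k
    · push_cast; ring
    · simp only [Nat.add_sub_cancel]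
      push_cast
      ring

lemma O6_genF_low (p q n : ℕ) (hn : 1 ≤ n) (hp : p ≤ n) (hq : q ≤ n) :
    O6 (genF p q n) = (q:ℂ) • genF p (q+1) n + (n:ℂ) • genF p (q+2) (n+1) := by
  have hmem := genF_memVV p q n hn hp hq
  funext z w
  show w^2 * deriv (fun w' => genF p q n z w') w
      = (q:ℂ) * genF p (q+1) n z w + (n:ℂ) * genF p (q+2) (n+1) z w
  by_cases hw : w = z
  · subst hw
    rw [memVV_derivw_pole hmem w, genF_diag _ _ _ hn, genF_diag _ _ _ (by omega)]
    ring
  · have hd := (hasDerivAt_wterm q n (z^p) z w hw).deriv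
    rw [show (fun w' => genF p q n z w') = (fun t => z^p * t^q/(z-t)^n) from rfl, hd]
    show _ = (q:ℂ) * (z^p * w^(q+1) / (z-w)^n) + (n:ℂ) * (z^p*w^(q+2)/(z-w)^(n+1))
    rcases q with _ | k
    · push_cast; ring
    · simp only [Nat.add_sub_cancel]
      push_cast
      ring

lemma O6_genF_top (p n : ℕ) (hn : 1 ≤ n) (hp : p ≤ n) :
    O6 (genF p n n) = (n:ℂ) • genF (p+1) (n+1) (n+1) := by
  have hmem := genF_memVV p n n hn hp le_rfl
  funext z w
  show w^2 * deriv (fun w' => genF p n n z w') w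
      = (n:ℂ) * genF (p+1) (n+1) (n+1) z w
  by_cases hw : w = z
  · subst hw
    rw [memVV_derivw_pole hmem w, genF_diag _ _ _ (by omega)]
    ring
  · have hd := (hasDerivAt_wterm n n (z^p) z w hw).deriv
    rw [show (fun w' => genF p n n z w') = (fun t => z^p * t^n/(z-t)^n) from rfl, hd]
    show _ = (n:ℂ) * (z^(p+1) * w^(n+1) / (z-w)^(n+1))
    have hzw : z - w ≠ 0 := sub_ne_zero.2 (fun h => hw (by linear_combination -h))
    rcases n with _ | m
    · omega
    · simp only [Nat.add_sub_cancel]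
      push_cast
      field_simp
      ring
lemma O1_zero : O1 (0 : ℂ → ℂ → ℂ) = 0 := by
  funext z w
  show deriv (fun z' => (0 : ℂ → ℂ → ℂ) z' w) z = 0
  simp only [Pi.zero_apply]
  exact deriv_const z 0

lemma O2_zero : O2 (0 : ℂ → ℂ → ℂ) = 0 := by
  funext z w
  show z * deriv (fun z' => (0 : ℂ → ℂ → ℂ) z' w) z = 0
  simp only [Pi.zero_apply]
  rw [deriv_const z 0, mul_zero]

lemma O3_zero : O3 (0 : ℂ → ℂ → ℂ) = 0 := by
  funext z w
  show z^2 * deriv (fun z' => (0 : ℂ → ℂ → ℂ) z' w) z = 0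
  simp only [Pi.zero_apply]
  rw [deriv_const z 0, mul_zero]

lemma O4_zero : O4 (0 : ℂ → ℂ → ℂ) = 0 := by
  funext z w
  show deriv (fun w' => (0 : ℂ → ℂ → ℂ) z w') w = 0
  simp only [Pi.zero_apply]
  exact deriv_const w 0

lemma O5_zero : O5 (0 : ℂ → ℂ → ℂ) = 0 := by
  funext z w
  show w * deriv (fun w' => (0 : ℂ → ℂ → ℂ) z w') w = 0
  simp only [Pi.zero_apply]
  rw [deriv_const w 0, mul_zero]

lemma O6_zero : O6 (0 : ℂ → ℂ → ℂ) = 0 := by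
  funext z w
  show w^2 * deriv (fun w' => (0 : ℂ → ℂ → ℂ) z w') w = 0
  simp only [Pi.zero_apply]
  rw [deriv_const w 0, mul_zero]

lemma O1_add {f g : ℂ → ℂ → ℂ} (hf : f ∈ VV) (hg : g ∈ VV) : O1 (f + g) = O1 f + O1 g := by
  funext z w
  show deriv (fun z' => f z' w + g z' w) z = deriv (fun z' => f z' w) z + deriv (fun z' => g z' w) z
  exact derivz_add hf hg w z

lemma O2_add {f g : ℂ → ℂ → ℂ} (hf : f ∈ VV) (hg : g ∈ VV) : O2 (f + g) = O2 f + O2 g := by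
  funext z w
  show z * deriv (fun z' => f z' w + g z' w) z
    = z * deriv (fun z' => f z' w) z + z * deriv (fun z' => g z' w) z
  rw [derivz_add hf hg w z]; ring

lemma O3_add {f g : ℂ → ℂ → ℂ} (hf : f ∈ VV) (hg : g ∈ VV) : O3 (f + g) = O3 f + O3 g := by
  funext z w
  show z^2 * deriv (fun z' => f z' w + g z' w) z
    = z^2 * deriv (fun z' => f z' w) z + z^2 * deriv (fun z' => g z' w) z
  rw [derivz_add hf hg w z]; ring

lemma O4_add {f g : ℂ → ℂ → ℂ} (hf : f ∈ VV) (hg : g ∈ VV) : O4 (f + g) = O4 f + O4 g := by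
  funext z w
  show deriv (fun w' => f z w' + g z w') w = deriv (fun w' => f z w') w + deriv (fun w' => g z w') w
  exact derivw_add hf hg z w

lemma O5_add {f g : ℂ → ℂ → ℂ} (hf : f ∈ VV) (hg : g ∈ VV) : O5 (f + g) = O5 f + O5 g := by
  funext z w
  show w * deriv (fun w' => f z w' + g z w') w
    = w * deriv (fun w' => f z w') w + w * deriv (fun w' => g z w') w
  rw [derivw_add hf hg z w]; ring

lemma O6_add {f g : ℂ → ℂ → ℂ} (hf : f ∈ VV) (hg : g ∈ VV) : O6 (f + g) = O6 f + O6 g := by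
  funext z w
  show w^2 * deriv (fun w' => f z w' + g z w') w
    = w^2 * deriv (fun w' => f z w') w + w^2 * deriv (fun w' => g z w') w
  rw [derivw_add hf hg z w]; ring

lemma smul_lam {f : ℂ → ℂ → ℂ} (a w : ℂ) :
    (fun z' => (a • f) z' w) = (fun z' => a * f z' w) := by
  funext z'; simp

lemma smul_lamW {f : ℂ → ℂ → ℂ} (a z : ℂ) :
    (fun w' => (a • f) z w') = (fun w' => a * f z w') := by
  funext w'; simp

lemma O1_smul (a : ℂ) {f : ℂ → ℂ → ℂ} (hf : f ∈ VV) : O1 (a • f) = a • O1 f := by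
  funext z w
  show deriv (fun z' => (a • f) z' w) z = a * deriv (fun z' => f z' w) z
  rw [smul_lam a w]
  exact derivz_smul hf a w z

lemma O2_smul (a : ℂ) {f : ℂ → ℂ → ℂ} (hf : f ∈ VV) : O2 (a • f) = a • O2 f := by
  funext z w
  show z * deriv (fun z' => (a • f) z' w) z = a * (z * deriv (fun z' => f z' w) z)
  rw [smul_lam a w, derivz_smul hf a w z]; ring

lemma O3_smul (a : ℂ) {f : ℂ → ℂ → ℂ} (hf : f ∈ VV) : O3 (a • f) = a • O3 f := by
  funext z w
  show z^2 * deriv (fun z' => (a • f) z' w) z = a * (z^2 * deriv (fun z' => f z' w) z)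
  rw [smul_lam a w, derivz_smul hf a w z]; ring

lemma O4_smul (a : ℂ) {f : ℂ → ℂ → ℂ} (hf : f ∈ VV) : O4 (a • f) = a • O4 f := by
  funext z w
  show deriv (fun w' => (a • f) z w') w = a * deriv (fun w' => f z w') w
  rw [smul_lamW a z]
  exact derivw_smul hf a z w

lemma O5_smul (a : ℂ) {f : ℂ → ℂ → ℂ} (hf : f ∈ VV) : O5 (a • f) = a • O5 f := by
  funext z w
  show w * deriv (fun w' => (a • f) z w') w = a * (w * deriv (fun w' => f z w') w)
  rw [smul_lamW a z, derivw_smul hf a z w]; ring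

lemma O6_smul (a : ℂ) {f : ℂ → ℂ → ℂ} (hf : f ∈ VV) : O6 (a • f) = a • O6 f := by
  funext z w
  show w^2 * deriv (fun w' => (a • f) z w') w = a * (w^2 * deriv (fun w' => f z w') w)
  rw [smul_lamW a z, derivw_smul hf a z w]; ring

lemma O1_memVV {f : ℂ → ℂ → ℂ} (hf : f ∈ VV) : O1 f ∈ VV := by
  induction hf using Submodule.span_induction with
  | mem f hf =>
    obtain ⟨p, q, n, hn, hp, hq, hne, rfl⟩ := hf
    rw [O1_genF p q n hn hp hq]
    exact sub_mem (Submodule.smul_mem _ _ (genF_memVV _ _ _ hn (by omega) hq))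
      (Submodule.smul_mem _ _ (genF_memVV _ _ _ (by omega) (by omega) (by omega)))
  | zero => rw [O1_zero]; exact zero_mem _
  | add x y hx hy ihx ihy => rw [O1_add hx hy]; exact add_mem ihx ihy
  | smul a x hx ihx => rw [O1_smul a hx]; exact Submodule.smul_mem _ _ ihx

lemma O2_memVV {f : ℂ → ℂ → ℂ} (hf : f ∈ VV) : O2 f ∈ VV := by
  induction hf using Submodule.span_induction with
  | mem f hf =>
    obtain ⟨p, q, n, hn, hp, hq, hne, rfl⟩ := hf
    rw [O2_genF p q n hn hp hq]
    exact sub_mem (Submodule.smul_mem _ _ (genF_memVV _ _ _ hn hp hq))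
      (Submodule.smul_mem _ _ (genF_memVV _ _ _ (by omega) (by omega) (by omega)))
  | zero => rw [O2_zero]; exact zero_mem _
  | add x y hx hy ihx ihy => rw [O2_add hx hy]; exact add_mem ihx ihy
  | smul a x hx ihx => rw [O2_smul a hx]; exact Submodule.smul_mem _ _ ihx

lemma O3_memVV {f : ℂ → ℂ → ℂ} (hf : f ∈ VV) : O3 f ∈ VV := by
  induction hf using Submodule.span_induction with
  | mem f hf =>
    obtain ⟨p, q, n, hn, hp, hq, hne, rfl⟩ := hf
    by_cases hpe : p = n
    · rw [hpe, O3_genF_top q n hn hq]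
      exact neg_mem (Submodule.smul_mem _ _ (genF_memVV _ _ _ (by omega) (by omega) (by omega)))
    · have hplt : p < n := lt_of_le_of_ne hp hpe
      rw [O3_genF_low p q n hn hp hq]
      exact sub_mem (Submodule.smul_mem _ _ (genF_memVV _ _ _ hn (by omega) hq))
        (Submodule.smul_mem _ _ (genF_memVV _ _ _ (by omega) (by omega) (by omega)))
  | zero => rw [O3_zero]; exact zero_mem _
  | add x y hx hy ihx ihy => rw [O3_add hx hy]; exact add_mem ihx ihy
  | smul a x hx ihx => rw [O3_smul a hx]; exact Submodule.smul_mem _ _ ihx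

lemma O4_memVV {f : ℂ → ℂ → ℂ} (hf : f ∈ VV) : O4 f ∈ VV := by
  induction hf using Submodule.span_induction with
  | mem f hf =>
    obtain ⟨p, q, n, hn, hp, hq, hne, rfl⟩ := hf
    rw [O4_genF p q n hn hp hq]
    exact add_mem (Submodule.smul_mem _ _ (genF_memVV _ _ _ hn hp (by omega)))
      (Submodule.smul_mem _ _ (genF_memVV _ _ _ (by omega) (by omega) (by omega)))
  | zero => rw [O4_zero]; exact zero_mem _
  | add x y hx hy ihx ihy => rw [O4_add hx hy]; exact add_mem ihx ihy
  | smul a x hx ihx => rw [O4_smul a hx]; exact Submodule.smul_mem _ _ ihx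

lemma O5_memVV {f : ℂ → ℂ → ℂ} (hf : f ∈ VV) : O5 f ∈ VV := by
  induction hf using Submodule.span_induction with
  | mem f hf =>
    obtain ⟨p, q, n, hn, hp, hq, hne, rfl⟩ := hf
    rw [O5_genF p q n hn hp hq]
    exact add_mem (Submodule.smul_mem _ _ (genF_memVV _ _ _ hn hp hq))
      (Submodule.smul_mem _ _ (genF_memVV _ _ _ (by omega) (by omega) (by omega)))
  | zero => rw [O5_zero]; exact zero_mem _
  | add x y hx hy ihx ihy => rw [O5_add hx hy]; exact add_mem ihx ihy
  | smul a x hx ihx => rw [O5_smul a hx]; exact Submodule.smul_mem _ _ ihx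

lemma O6_memVV {f : ℂ → ℂ → ℂ} (hf : f ∈ VV) : O6 f ∈ VV := by
  induction hf using Submodule.span_induction with
  | mem f hf =>
    obtain ⟨p, q, n, hn, hp, hq, hne, rfl⟩ := hf
    by_cases hqe : q = n
    · rw [hqe, O6_genF_top p n hn hp]
      exact Submodule.smul_mem _ _ (genF_memVV _ _ _ (by omega) (by omega) (by omega))
    · have hqlt : q < n := lt_of_le_of_ne hq hqe
      rw [O6_genF_low p q n hn hp hq]
      exact add_mem (Submodule.smul_mem _ _ (genF_memVV _ _ _ hn hp (by omega)))
        (Submodule.smul_mem _ _ (genF_memVV _ _ _ (by omega) (by omega) (by omega)))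
  | zero => rw [O6_zero]; exact zero_mem _
  | add x y hx hy ihx ihy => rw [O6_add hx hy]; exact add_mem ihx ihy
  | smul a x hx ihx => rw [O6_smul a hx]; exact Submodule.smul_mem _ _ ihx

def OpSet : Set ((ℂ → ℂ → ℂ) → (ℂ → ℂ → ℂ)) := {O1, O2, O3, O4, O5, O6}

lemma Oset_memVV {o : (ℂ → ℂ → ℂ) → (ℂ → ℂ → ℂ)} (ho : o ∈ OpSet)
    {f : ℂ → ℂ → ℂ} (hf : f ∈ VV) : o f ∈ VV := by
  simp only [OpSet, Set.mem_insert_iff, Set.mem_singleton_iff] at ho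
  rcases ho with rfl | rfl | rfl | rfl | rfl | rfl
  exacts [O1_memVV hf, O2_memVV hf, O3_memVV hf, O4_memVV hf, O5_memVV hf, O6_memVV hf]

lemma Oset_zero {o : (ℂ → ℂ → ℂ) → (ℂ → ℂ → ℂ)} (ho : o ∈ OpSet) : o 0 = 0 := by
  simp only [OpSet, Set.mem_insert_iff, Set.mem_singleton_iff] at ho
  rcases ho with rfl | rfl | rfl | rfl | rfl | rfl
  exacts [O1_zero, O2_zero, O3_zero, O4_zero, O5_zero, O6_zero]

lemma Oset_add {o : (ℂ → ℂ → ℂ) → (ℂ → ℂ → ℂ)} (ho : o ∈ OpSet)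
    {f g : ℂ → ℂ → ℂ} (hf : f ∈ VV) (hg : g ∈ VV) : o (f + g) = o f + o g := by
  simp only [OpSet, Set.mem_insert_iff, Set.mem_singleton_iff] at ho
  rcases ho with rfl | rfl | rfl | rfl | rfl | rfl
  exacts [O1_add hf hg, O2_add hf hg, O3_add hf hg, O4_add hf hg, O5_add hf hg, O6_add hf hg]

lemma Oset_smul {o : (ℂ → ℂ → ℂ) → (ℂ → ℂ → ℂ)} (ho : o ∈ OpSet) (a : ℂ)
    {f : ℂ → ℂ → ℂ} (hf : f ∈ VV) : o (a • f) = a • o f := by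
  simp only [OpSet, Set.mem_insert_iff, Set.mem_singleton_iff] at ho
  rcases ho with rfl | rfl | rfl | rfl | rfl | rfl
  exacts [O1_smul a hf, O2_smul a hf, O3_smul a hf, O4_smul a hf, O5_smul a hf, O6_smul a hf]

lemma seed_eq : (fun z w => 1/(z-w) : ℂ → ℂ → ℂ) = genF 0 0 1 := by
  funext z w
  show 1/(z-w) = z^0 * w^0 / (z-w)^1
  simp

noncomputable def SS : Submodule ℂ (ℂ → ℂ → ℂ) :=
  Submodule.span ℂ
    {g : ℂ → ℂ → ℂ | ∃ L : List ((ℂ → ℂ → ℂ) → (ℂ → ℂ → ℂ)),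
      (∀ o ∈ L, o ∈ ({O1, O2, O3, O4, O5, O6} :
          Set ((ℂ → ℂ → ℂ) → (ℂ → ℂ → ℂ)))) ∧
      g = L.foldr (fun o h => o h) (fun z w => 1 / (z - w))}

lemma foldr_memVV : ∀ L : List ((ℂ → ℂ → ℂ) → (ℂ → ℂ → ℂ)),
    (∀ o ∈ L, o ∈ OpSet) →
    L.foldr (fun o h => o h) (fun z w => 1/(z-w)) ∈ VV := by
  intro L
  induction L with
  | nil =>
    intro _
    show (fun z w => 1/(z-w) : ℂ → ℂ → ℂ) ∈ VV
    rw [seed_eq]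
    exact genF_memVV 0 0 1 le_rfl (by omega) (by omega)
  | cons o L ih =>
    intro hL
    show o (L.foldr (fun o h => o h) (fun z w => 1/(z-w))) ∈ VV
    exact Oset_memVV (hL o List.mem_cons_self)
      (ih (fun o' ho' => hL o' (List.mem_cons_of_mem _ ho')))

lemma SS_le_VV : SS ≤ VV := by
  rw [SS, Submodule.span_le]
  rintro g ⟨L, hL, rfl⟩
  exact foldr_memVV L hL

lemma Oset_memSS {o : (ℂ → ℂ → ℂ) → (ℂ → ℂ → ℂ)} (ho : o ∈ OpSet)
    {g : ℂ → ℂ → ℂ} (hg : g ∈ SS) : o g ∈ SS := by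
  induction hg using Submodule.span_induction with
  | mem g hgm =>
    obtain ⟨L, hL, rfl⟩ := hgm
    refine Submodule.subset_span ⟨o :: L, ?_, rfl⟩
    intro o' ho'
    rcases List.mem_cons.1 ho' with h | h
    · subst h; exact ho
    · exact hL o' h
  | zero => rw [Oset_zero ho]; exact zero_mem _
  | add x y hx hy ihx ihy =>
    rw [Oset_add ho (SS_le_VV hx) (SS_le_VV hy)]; exact add_mem ihx ihy
  | smul a x hx ihx =>
    rw [Oset_smul ho a (SS_le_VV hx)]; exact Submodule.smul_mem _ _ ihx

lemma hO1 : O1 ∈ OpSet := by left; rfl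
lemma hO2 : O2 ∈ OpSet := by right; left; rfl
lemma hO3 : O3 ∈ OpSet := by right; right; left; rfl
lemma hO5 : O5 ∈ OpSet := by right; right; right; right; left; rfl
lemma hO6 : O6 ∈ OpSet := by right; right; right; right; right; rfl

lemma unsmul {n : ℕ} (hn : 1 ≤ n) {g : ℂ → ℂ → ℂ} (h : (n:ℂ) • g ∈ SS) : g ∈ SS := by
  have hne : (n:ℂ) ≠ 0 := Nat.cast_ne_zero.2 (by omega)
  have h5 := SS.smul_mem (n:ℂ)⁻¹ h
  rwa [smul_smul, inv_mul_cancel₀ hne, one_smul] at h5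

lemma step_O1 {p q n : ℕ} (hn : 1 ≤ n) (hp : p ≤ n) (hq : q ≤ n)
    (h : genF p q n ∈ SS) (h' : genF (p-1) q n ∈ SS) : genF p q (n+1) ∈ SS := by
  have h2 : O1 (genF p q n) ∈ SS := Oset_memSS hO1 h
  rw [O1_genF p q n hn hp hq] at h2
  have h4 := SS.sub_mem (SS.smul_mem (p:ℂ) h') h2
  rw [sub_sub_cancel] at h4
  exact unsmul hn h4

lemma step_O2 {p q n : ℕ} (hn : 1 ≤ n) (hp : p ≤ n) (hq : q ≤ n)
    (h : genF p q n ∈ SS) : genF (p+1) q (n+1) ∈ SS := by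
  have h2 : O2 (genF p q n) ∈ SS := Oset_memSS hO2 h
  rw [O2_genF p q n hn hp hq] at h2
  have h4 := SS.sub_mem (SS.smul_mem (p:ℂ) h) h2
  rw [sub_sub_cancel] at h4
  exact unsmul hn h4

lemma step_O5 {p q n : ℕ} (hn : 1 ≤ n) (hp : p ≤ n) (hq : q ≤ n)
    (h : genF p q n ∈ SS) : genF p (q+1) (n+1) ∈ SS := by
  have h2 : O5 (genF p q n) ∈ SS := Oset_memSS hO5 h
  rw [O5_genF p q n hn hp hq] at h2
  have h4 := SS.sub_mem h2 (SS.smul_mem (q:ℂ) h)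
  rw [add_sub_cancel_left] at h4
  exact unsmul hn h4

lemma step_O3top {q n : ℕ} (hn : 1 ≤ n) (hq : q ≤ n)
    (h : genF n q n ∈ SS) : genF (n+1) (q+1) (n+1) ∈ SS := by
  have h2 : O3 (genF n q n) ∈ SS := Oset_memSS hO3 h
  rw [O3_genF_top q n hn hq] at h2
  have h4 := SS.neg_mem h2
  rw [neg_neg] at h4
  exact unsmul hn h4

lemma step_O6top {p n : ℕ} (hn : 1 ≤ n) (hp : p ≤ n)
    (h : genF p n n ∈ SS) : genF (p+1) (n+1) (n+1) ∈ SS := by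
  have h2 : O6 (genF p n n) ∈ SS := Oset_memSS hO6 h
  rw [O6_genF_top p n hn hp] at h2
  exact unsmul hn h2

lemma step_O3zero {q n : ℕ} (hn : 1 ≤ n) (hq : q ≤ n)
    (h : genF 0 q n ∈ SS) : genF 2 q (n+1) ∈ SS := by
  have h2 : O3 (genF 0 q n) ∈ SS := Oset_memSS hO3 h
  rw [O3_genF_low 0 q n hn (by omega) hq] at h2
  simp only [Nat.cast_zero, zero_smul, zero_sub] at h2
  have h4 := SS.neg_mem h2
  rw [neg_neg] at h4
  exact unsmul hn h4

lemma step_O6zero {p n : ℕ} (hn : 1 ≤ n) (hp : p ≤ n)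
    (h : genF p 0 n ∈ SS) : genF p 2 (n+1) ∈ SS := by
  have h2 : O6 (genF p 0 n) ∈ SS := Oset_memSS hO6 h
  rw [O6_genF_low p 0 n hn hp (by omega)] at h2
  simp only [Nat.cast_zero, zero_smul, zero_add] at h2
  exact unsmul hn h2

lemma step_mono {p q n : ℕ} (hn : 1 ≤ n)
    (h1 : genF (p+1) q (n+1) ∈ SS) (h2 : genF p (q+1) (n+1) ∈ SS) : genF p q n ∈ SS := by
  rw [genF_mono p q n hn]
  exact sub_mem h1 h2

lemma seed_memSS : genF 0 0 1 ∈ SS := by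
  have h : (fun z w => 1/(z-w) : ℂ → ℂ → ℂ) ∈ SS :=
    Submodule.subset_span ⟨[], fun o ho => absurd ho List.not_mem_nil, rfl⟩
  rwa [seed_eq] at h

def Pn (n : ℕ) : Prop := ∀ p q, p ≤ n → q ≤ n → genF p q n ∈ SS

lemma P1 : Pn 1 := by
  have g001 := seed_memSS
  have g102 : genF 1 0 2 ∈ SS := step_O2 le_rfl (by omega) (by omega) g001
  have g202 : genF 2 0 2 ∈ SS := step_O3zero le_rfl (by omega) g001
  have g022 : genF 0 2 2 ∈ SS := step_O6zero le_rfl (by omega) g001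
  have g213 : genF 2 1 3 ∈ SS := step_O5 (by omega) (by omega) (by omega) g202
  have g123 : genF 1 2 3 ∈ SS := step_O2 (by omega) (by omega) (by omega) g022
  have g223 : genF 2 2 3 ∈ SS := step_O3zero (by omega) (by omega) g022
  have g313 : genF 3 1 3 ∈ SS := step_O3top (n := 2) (by omega) (by omega) g202
  have g133 : genF 1 3 3 ∈ SS := step_O6top (n := 2) (by omega) (by omega) g022
  have g112 : genF 1 1 2 ∈ SS := step_mono (by omega) g213 g123
  have g212 : genF 2 1 2 ∈ SS := step_mono (by omega) g313 g223
  have g122 : genF 1 2 2 ∈ SS := step_mono (by omega) g223 g133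
  have g101 : genF 1 0 1 ∈ SS := step_mono (by omega) g202 g112
  have g011 : genF 0 1 1 ∈ SS := step_mono (by omega) g112 g022
  have g111 : genF 1 1 1 ∈ SS := step_mono (by omega) g212 g122
  intro p q hp hq
  interval_cases p <;> interval_cases q <;> assumption

lemma P_step (n : ℕ) (hn : 1 ≤ n) (ih : Pn n) : Pn (n+1) := by
  intro a b ha hb
  by_cases hb' : b ≤ n
  · rcases Nat.eq_zero_or_pos a with ha0 | ha1
    · subst ha0
      rcases Nat.eq_zero_or_pos b with hb0 | hb1
      · subst hb0
        exact step_O1 hn (by omega) (by omega) (ih 0 0 (by omega) (by omega))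
          (ih 0 0 (by omega) (by omega))
      · have h := step_O5 hn (by omega) (by omega : b-1 ≤ n) (ih 0 (b-1) (by omega) (by omega))
        rwa [show b-1+1 = b by omega] at h
    · have h := step_O2 hn (by omega : a-1 ≤ n) hb' (ih (a-1) b (by omega) hb')
      rwa [show a-1+1 = a by omega] at h
  · have hb1 : b = n+1 := by omega
    subst hb1
    by_cases ha' : a ≤ n
    · exact step_O5 hn ha' le_rfl (ih a n ha' le_rfl)
    · have ha1 : a = n+1 := by omega
      subst ha1
      exact step_O3top hn le_rfl (ih n n le_rfl le_rfl)

lemma P_all : ∀ n, 1 ≤ n → Pn n := by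
  intro n
  induction n with
  | zero => omega
  | succ m ih =>
    intro _
    rcases Nat.eq_zero_or_pos m with h0 | h1
    · subst h0; exact P1
    · exact P_step m h1 (ih h1)

lemma VV_le_iSup : VV ≤ ⨆ n : ℕ, AnF (n + 1) := by
  rw [VV, Submodule.span_le]
  rintro f ⟨p, q, n, hn, hp, hq, hne, rfl⟩
  have hmem : genF p q n ∈ AnF n := Submodule.subset_span ⟨p, q, hp, hq, hne, rfl⟩
  obtain ⟨m, rfl⟩ : ∃ m, n = m + 1 := ⟨n - 1, by omega⟩
  exact (le_iSup (fun k : ℕ => AnF (k + 1)) m) hmem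

lemma iSup_le_SS : (⨆ n : ℕ, AnF (n + 1)) ≤ SS := by
  apply iSup_le
  intro n
  rw [AnF, Submodule.span_le]
  rintro f ⟨p, q, hp, hq, hne, rfl⟩
  exact P_all (n+1) (by omega) p q hp hq
/-- `1/(z - z̄)` is a cyclic vector: the span of its images under all finite
products of the six operators `∂_z, z∂_z, z²∂_z, ∂_z̄, z̄∂_z̄, z̄²∂_z̄`
equals `A = ∑_{n ≥ 1} A_n`. -/
theorem stmt15 :
    Submodule.span ℂ
      {g : ℂ → ℂ → ℂ | ∃ L : List ((ℂ → ℂ → ℂ) → (ℂ → ℂ → ℂ)),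
        (∀ o ∈ L, o ∈ ({O1, O2, O3, O4, O5, O6} :
            Set ((ℂ → ℂ → ℂ) → (ℂ → ℂ → ℂ)))) ∧
        g = L.foldr (fun o h => o h) (fun z w => 1 / (z - w))}
      = ⨆ n : ℕ, AnF (n + 1) := by
  exact le_antisymm (SS_le_VV.trans VV_le_iSup) iSup_le_SS
end
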